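/- Let φ_1,…,φ_D be orthonormal vectors in ℝ^n, ε a vector of independent Rademacher variables, and χ = (∑_{j=1}^D ⟨ε, φ_j⟩²)^{1/2}. Then for every x > 0, P(χ > √D + 2√(2x)) ≤ e^{−x} and P(χ < √((D−2)_+) − 2√(2x)) ≤ e^{−x}. -/

import Mathlib

open Finset MeasureTheory ProbabilityTheory
open scoped ENNReal

namespace ChiTail


lemma exp_taylor4_le {x : ℝ} (hx : |x| ≤ 1) :
    Real.exp x ≤ 1 + x + x ^ 2 / 2 + x ^ 3 / 6 + (5 / 96) * x ^ 4 := by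
  have h := Real.exp_bound hx (n := 4) (by norm_num)
  norm_num [Finset.sum_range_succ, Nat.factorial] at h
  have h2 := (abs_sub_le_iff.1 h).1
  have h3 : |x| ^ 4 = x ^ 4 := by
    rw [← abs_pow, abs_of_nonneg (by positivity)]
  rw [h3] at h2
  linarith

lemma core_ineq {a : ℝ} (h0 : 0 ≤ a) (h1 : a ≤ 1) :
    Real.exp (a - a ^ 2 / 2) + Real.exp (-a) + Real.exp (-(a ^ 2 / 2)) ≤ 3 := by
  have hb1 : |a - a ^ 2 / 2| ≤ 1 := by rw [abs_le]; constructor <;> nlinarith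
  have hb2 : |(-a)| ≤ 1 := by rw [abs_le]; constructor <;> nlinarith
  have hb3 : |(-(a ^ 2 / 2))| ≤ 1 := by rw [abs_le]; constructor <;> nlinarith
  have t1 := exp_taylor4_le hb1
  have t2 := exp_taylor4_le hb2
  have t3 := exp_taylor4_le hb3
  have key : (1 + (a - a^2/2) + (a - a^2/2)^2/2 + (a - a^2/2)^3/6 + (5/96)*(a - a^2/2)^4)
      + (1 + (-a) + (-a)^2/2 + (-a)^3/6 + (5/96)*(-a)^4)
      + (1 + (-(a^2/2)) + (-(a^2/2))^2/2 + (-(a^2/2))^3/6 + (5/96)*(-(a^2/2))^4) ≤ 3 := by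
    have hq : -(1:ℝ)/2 + (5/48)*a + (1/48)*a^2 + (7/192)*a^3 - (5/192)*a^4 + (5/768)*a^5 ≤ -1/3 := by
      nlinarith [pow_nonneg h0 3, pow_nonneg h0 4, pow_nonneg h0 5, sq_nonneg a]
    have ha3 : 0 ≤ a^3 := pow_nonneg h0 3
    nlinarith [mul_nonneg ha3 (sub_nonneg.2 h1), mul_le_mul_of_nonneg_left hq ha3]
  linarith

lemma exp_half_le : Real.exp (1/2) ≤ 1.6488 := by
  have h := Real.exp_one_lt_d9
  have h2 : Real.exp (1/2) * Real.exp (1/2) = Real.exp 1 := by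
    rw [← Real.exp_add]; norm_num
  nlinarith [Real.exp_pos (1/2 : ℝ)]

lemma exp_neg_one_le : Real.exp (-1 : ℝ) ≤ 0.368 := by
  have h := Real.exp_one_gt_d9
  rw [Real.exp_neg]
  rw [inv_le_comm₀ (Real.exp_pos 1) (by norm_num)]
  linarith

lemma branch_ge_one {a : ℝ} (h1 : 1 ≤ a) :
    (Real.exp (1/2) + 1) * (Real.exp (-a) + 1) ≤ 4 := by
  have h2 : Real.exp (-a) ≤ Real.exp (-1 : ℝ) := Real.exp_le_exp.2 (by linarith)
  have h3 := exp_neg_one_le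
  have h4 := exp_half_le
  nlinarith [Real.exp_pos (-a), Real.exp_pos (1/2 : ℝ)]

/-- The two-point weak transport-entropy inequality for the uniform measure on `{−1,1}`,
with explicit near-optimal mixing weights. -/
lemma two_point (A B : ℝ) : ∃ p q : ℝ, 0 ≤ p ∧ p ≤ 1 ∧ 0 ≤ q ∧ q ≤ 1 ∧
    (Real.exp (p * A + (1 - p) * B + (1 - p) ^ 2 / 2)
      + Real.exp (q * A + (1 - q) * B + q ^ 2 / 2)) *
      (Real.exp (-A) + Real.exp (-B)) ≤ 4 := by
  rcases le_total B A with hBA | hAB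
  · set a := A - B with ha
    have h0 : 0 ≤ a := by simp [ha]; linarith
    rcases le_total a 1 with hle | hgt
    · refine ⟨1 - a, 0, by linarith, by linarith, le_refl 0, by norm_num, ?_⟩
      have e1 : (1 - a) * A + (1 - (1 - a)) * B + (1 - (1 - a)) ^ 2 / 2 = A - a ^ 2 / 2 := by
        rw [ha]; ring
      have e2 : (0:ℝ) * A + (1 - 0) * B + (0:ℝ) ^ 2 / 2 = B := by ring
      rw [e1, e2]
      have expand : (Real.exp (A - a ^ 2 / 2) + Real.exp B) * (Real.exp (-A) + Real.exp (-B))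
          = Real.exp (-(a^2/2)) + Real.exp (a - a^2/2) + Real.exp (-a) + 1 := by
        rw [mul_add, add_mul, add_mul, ← Real.exp_add, ← Real.exp_add, ← Real.exp_add,
          ← Real.exp_add]
        rw [show A - a ^ 2 / 2 + -A = -(a^2/2) by ring,
          show A - a ^ 2 / 2 + -B = a - a^2/2 by rw [ha]; ring,
          show B + -A = -a by rw [ha]; ring, show B + -B = 0 by ring, Real.exp_zero]
        ring
      rw [expand]
      have := core_ineq h0 hle
      linarith
    · refine ⟨0, 0, le_refl 0, by norm_num, le_refl 0, by norm_num, ?_⟩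
      have e1 : (0:ℝ) * A + (1 - 0) * B + (1 - 0) ^ 2 / 2 = B + 1/2 := by ring
      have e2 : (0:ℝ) * A + (1 - 0) * B + (0:ℝ) ^ 2 / 2 = B := by ring
      rw [e1, e2]
      have expand : (Real.exp (B + 1/2) + Real.exp B) * (Real.exp (-A) + Real.exp (-B))
          = (Real.exp (1/2) + 1) * (Real.exp (-a) + 1) := by
        rw [mul_add, add_mul, add_mul, ← Real.exp_add, ← Real.exp_add, ← Real.exp_add,
          ← Real.exp_add]
        rw [show B + 1/2 + -A = -a + 1/2 by rw [ha]; ring,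
          show B + -A = -a by rw [ha]; ring,
          show B + 1/2 + -B = 1/2 by ring, show B + -B = 0 by ring, Real.exp_zero,
          show -a + 1/2 = 1/2 + -a by ring, Real.exp_add]
        ring
      rw [expand]
      exact branch_ge_one hgt
  · set a := B - A with ha
    have h0 : 0 ≤ a := by simp [ha]; linarith
    rcases le_total a 1 with hle | hgt
    · refine ⟨1, a, by norm_num, by norm_num, h0, hle, ?_⟩
      have e1 : (1:ℝ) * A + (1 - 1) * B + (1 - 1) ^ 2 / 2 = A := by ring
      have e2 : a * A + (1 - a) * B + a ^ 2 / 2 = B - a ^ 2 / 2 := by rw [ha]; ring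
      rw [e1, e2]
      have expand : (Real.exp A + Real.exp (B - a ^ 2 / 2)) * (Real.exp (-A) + Real.exp (-B))
          = 1 + Real.exp (-a) + Real.exp (a - a^2/2) + Real.exp (-(a^2/2)) := by
        rw [mul_add, add_mul, add_mul, ← Real.exp_add, ← Real.exp_add, ← Real.exp_add,
          ← Real.exp_add]
        rw [show A + -A = 0 by ring, Real.exp_zero,
          show A + -B = -a by rw [ha]; ring,
          show B - a ^ 2 / 2 + -A = a - a^2/2 by rw [ha]; ring,
          show B - a ^ 2 / 2 + -B = -(a^2/2) by ring]
        ring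
      rw [expand]
      have := core_ineq h0 hle
      linarith
    · refine ⟨1, 1, by norm_num, by norm_num, by norm_num, by norm_num, ?_⟩
      have e1 : (1:ℝ) * A + (1 - 1) * B + (1 - 1) ^ 2 / 2 = A := by ring
      have e2 : (1:ℝ) * A + (1 - 1) * B + (1:ℝ) ^ 2 / 2 = A + 1/2 := by ring
      rw [e1, e2]
      have expand : (Real.exp A + Real.exp (A + 1/2)) * (Real.exp (-A) + Real.exp (-B))
          = (Real.exp (1/2) + 1) * (Real.exp (-a) + 1) := by
        rw [mul_add, add_mul, add_mul, ← Real.exp_add, ← Real.exp_add, ← Real.exp_add,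
          ← Real.exp_add]
        rw [show A + -A = 0 by ring, Real.exp_zero,
          show A + -B = -a by rw [ha]; ring,
          show A + 1/2 + -A = 1/2 by ring,
          show A + 1/2 + -B = 1/2 + -a by rw [ha]; ring, Real.exp_add]
        ring
      rw [expand]
      exact branch_ge_one hgt




noncomputable section

def sg (b : Bool) : ℝ := if b then 1 else -1

@[simp] lemma sg_true : sg true = 1 := rfl
@[simp] lemma sg_false : sg false = -1 := rfl

lemma sum_cube_succ {n : ℕ} {M : Type*} [AddCommMonoid M] (F : (Fin (n+1) → Bool) → M) :
    ∑ x, F x = (∑ τ : Fin n → Bool, F (Fin.cons true τ)) +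
      (∑ τ : Fin n → Bool, F (Fin.cons false τ)) := by
  rw [← Fintype.sum_equiv (Fin.consEquiv fun _ : Fin (n+1) => Bool)
    (fun p => F (Fin.cons p.1 p.2)) F (fun p => rfl)]
  rw [Fintype.sum_prod_type, Fintype.sum_bool]


/-- barycentric inf-convolution with quadratic cost 1/8 on the discrete cube -/
def Qt {n : ℕ} (f : (Fin n → Bool) → ℝ) (x : Fin n → Bool) : ℝ :=
  sInf {r | ∃ ν : (Fin n → Bool) → ℝ, (∀ y, 0 ≤ ν y) ∧ (∑ y, ν y) = 1 ∧
    r = ∑ y, ν y * f y + (1/8) * ∑ i, (sg (x i) - ∑ y, ν y * sg (y i)) ^ 2}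

lemma Qt_set_nonempty {n : ℕ} (f : (Fin n → Bool) → ℝ) (x : Fin n → Bool) :
    (f x) ∈ {r | ∃ ν : (Fin n → Bool) → ℝ, (∀ y, 0 ≤ ν y) ∧ (∑ y, ν y) = 1 ∧
      r = ∑ y, ν y * f y + (1/8) * ∑ i, (sg (x i) - ∑ y, ν y * sg (y i)) ^ 2} := by
  refine ⟨fun y => if y = x then 1 else 0, fun y => by positivity, by simp, ?_⟩
  have h1 : ∀ i, (∑ y, (if y = x then (1:ℝ) else 0) * sg (y i)) = sg (x i) := by
    intro i; rw [Finset.sum_eq_single x] <;> simp +contextual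
  have h2 : (∑ y, (if y = x then (1:ℝ) else 0) * f y) = f x := by
    rw [Finset.sum_eq_single x] <;> simp +contextual
  simp [h1, h2]

lemma Qt_bddBelow {n : ℕ} (f : (Fin n → Bool) → ℝ) (x : Fin n → Bool) :
    BddBelow {r | ∃ ν : (Fin n → Bool) → ℝ, (∀ y, 0 ≤ ν y) ∧ (∑ y, ν y) = 1 ∧
      r = ∑ y, ν y * f y + (1/8) * ∑ i, (sg (x i) - ∑ y, ν y * sg (y i)) ^ 2} := by
  refine ⟨-∑ y, |f y|, ?_⟩
  rintro r ⟨ν, hν0, hν1, rfl⟩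
  have hle1 : ∀ y, ν y ≤ 1 := by
    intro y
    calc ν y ≤ ∑ z, ν z := Finset.single_le_sum (fun z _ => hν0 z) (mem_univ y)
    _ = 1 := hν1
  have : ∀ y : Fin n → Bool, -|f y| ≤ ν y * f y := by
    intro y
    rcases le_total 0 (f y) with h | h
    · calc -|f y| ≤ 0 := neg_nonpos.2 (abs_nonneg _)
      _ ≤ ν y * f y := mul_nonneg (hν0 y) h
    · calc -|f y| = -(1 * |f y|) := by ring
      _ ≤ -(ν y * |f y|) := by
          have := mul_le_mul_of_nonneg_right (hle1 y) (abs_nonneg (f y)); linarith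
      _ = ν y * f y := by rw [abs_of_nonpos h]; ring
  have h3 : -∑ y, |f y| ≤ ∑ y, ν y * f y := by
    rw [← Finset.sum_neg_distrib]
    exact Finset.sum_le_sum fun y _ => this y
  have h4 : (0:ℝ) ≤ (1/8) * ∑ i, (sg (x i) - ∑ y, ν y * sg (y i)) ^ 2 := by positivity
  linarith

lemma Qt_le_self {n : ℕ} (f : (Fin n → Bool) → ℝ) (x : Fin n → Bool) : Qt f x ≤ f x :=
  csInf_le (Qt_bddBelow f x) (Qt_set_nonempty f x)

lemma sq_convex_comb {p u v : ℝ} (h0 : 0 ≤ p) (h1 : p ≤ 1) :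
    (p * u + (1 - p) * v) ^ 2 ≤ p * u ^ 2 + (1 - p) * v ^ 2 := by
  nlinarith [sq_nonneg (u - v), mul_nonneg h0 (sub_nonneg.2 h1)]

lemma nu_split {n : ℕ} (ν₁ ν₀ : (Fin n → Bool) → ℝ) (p : ℝ) (H : (Fin (n+1) → Bool) → ℝ) :
    ∑ z, (if z 0 = true then p * ν₁ (Fin.tail z) else (1-p) * ν₀ (Fin.tail z)) * H z
      = p * (∑ τ', ν₁ τ' * H (Fin.cons true τ'))
        + (1-p) * (∑ τ', ν₀ τ' * H (Fin.cons false τ')) := by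
  rw [sum_cube_succ (fun z => (if z 0 = true then p * ν₁ (Fin.tail z)
    else (1-p) * ν₀ (Fin.tail z)) * H z)]
  simp only [Fin.cons_zero, Fin.tail_cons, if_true, if_false, Finset.mul_sum]
  simp [mul_assoc]

lemma Qt_cons_le {n : ℕ} (f : (Fin (n+1) → Bool) → ℝ) (t : Bool) (τ : Fin n → Bool)
    {p : ℝ} (hp0 : 0 ≤ p) (hp1 : p ≤ 1) :
    Qt f (Fin.cons t τ) ≤ p * Qt (fun y => f (Fin.cons true y)) τ
      + (1 - p) * Qt (fun y => f (Fin.cons false y)) τ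
      + (1/8) * (sg t - (2*p - 1)) ^ 2 := by
  set f₁ : (Fin n → Bool) → ℝ := fun y => f (Fin.cons true y) with hf₁
  set f₀ : (Fin n → Bool) → ℝ := fun y => f (Fin.cons false y) with hf₀
  refine le_of_forall_pos_le_add fun ε hε => ?_
  obtain ⟨r₁, ⟨ν₁, hν₁0, hν₁1, rfl⟩, hr₁⟩ :
      ∃ r ∈ {r | ∃ ν : (Fin n → Bool) → ℝ, (∀ y, 0 ≤ ν y) ∧ (∑ y, ν y) = 1 ∧
        r = ∑ y, ν y * f₁ y + (1/8) * ∑ i, (sg (τ i) - ∑ y, ν y * sg (y i)) ^ 2},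
        r < Qt f₁ τ + ε/2 := by
    refine (csInf_lt_iff (Qt_bddBelow f₁ τ) ⟨f₁ τ, Qt_set_nonempty f₁ τ⟩).1 ?_
    unfold Qt; linarith
  obtain ⟨r₀, ⟨ν₀, hν₀0, hν₀1, rfl⟩, hr₀⟩ :
      ∃ r ∈ {r | ∃ ν : (Fin n → Bool) → ℝ, (∀ y, 0 ≤ ν y) ∧ (∑ y, ν y) = 1 ∧
        r = ∑ y, ν y * f₀ y + (1/8) * ∑ i, (sg (τ i) - ∑ y, ν y * sg (y i)) ^ 2},
        r < Qt f₀ τ + ε/2 := by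
    refine (csInf_lt_iff (Qt_bddBelow f₀ τ) ⟨f₀ τ, Qt_set_nonempty f₀ τ⟩).1 ?_
    unfold Qt; linarith
  set ν : (Fin (n+1) → Bool) → ℝ :=
    fun z => if z 0 = true then p * ν₁ (Fin.tail z) else (1-p) * ν₀ (Fin.tail z) with hν
  have hν0 : ∀ z, 0 ≤ ν z := by
    intro z; rw [hν]; dsimp only
    split <;> [exact mul_nonneg hp0 (hν₁0 _); exact mul_nonneg (by linarith) (hν₀0 _)]
  have hνsum : (∑ z, ν z) = 1 := by
    have := nu_split ν₁ ν₀ p (fun _ => 1)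
    simpa [hν₁1, hν₀1] using this
  -- the value of the composed witness
  set R : ℝ := ∑ z, ν z * f z +
      (1/8) * ∑ i, (sg (Fin.cons (α := fun _ => Bool) t τ i) - ∑ z, ν z * sg (z i)) ^ 2 with hR
  have hmem : R ∈ {r | ∃ ν' : (Fin (n+1) → Bool) → ℝ, (∀ y, 0 ≤ ν' y) ∧ (∑ y, ν' y) = 1 ∧
      r = ∑ y, ν' y * f y + (1/8) * ∑ i, (sg (Fin.cons (α := fun _ => Bool) t τ i) - ∑ y, ν' y * sg (y i)) ^ 2} :=
    ⟨ν, hν0, hνsum, rfl⟩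
  have hQle : Qt f (Fin.cons t τ) ≤ R := csInf_le (Qt_bddBelow f _) hmem
  -- now bound R
  have hEf : ∑ z, ν z * f z = p * (∑ τ', ν₁ τ' * f₁ τ') + (1-p) * (∑ τ', ν₀ τ' * f₀ τ') :=
    nu_split ν₁ ν₀ p f
  have hbar : ∀ i : Fin (n+1), (∑ z, ν z * sg (z i)) =
      p * (∑ τ', ν₁ τ' * sg (Fin.cons (α := fun _ => Bool) true τ' i)) +
      (1-p) * (∑ τ', ν₀ τ' * sg (Fin.cons (α := fun _ => Bool) false τ' i)) :=
    fun i => nu_split ν₁ ν₀ p (fun z => sg (z i))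
  have hbar0 : (∑ z, ν z * sg (z 0)) = 2*p - 1 := by
    rw [hbar 0]; simp [hν₁1, hν₀1, ← Finset.sum_mul]; ring
  have hcost : ∑ i, (sg (Fin.cons (α := fun _ => Bool) t τ i) - ∑ z, ν z * sg (z i)) ^ 2 ≤
      (sg t - (2*p-1)) ^ 2
      + (p * ∑ i : Fin n, (sg (τ i) - ∑ τ', ν₁ τ' * sg (τ' i)) ^ 2
        + (1-p) * ∑ i : Fin n, (sg (τ i) - ∑ τ', ν₀ τ' * sg (τ' i)) ^ 2) := by
    rw [Fin.sum_univ_succ]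
    have h00 : (sg (Fin.cons (α := fun _ => Bool) t τ 0) - ∑ z, ν z * sg (z 0)) ^ 2 = (sg t - (2*p-1))^2 := by
      rw [hbar0, Fin.cons_zero]
    rw [h00]
    have hsucc : ∀ i : Fin n, (sg (Fin.cons (α := fun _ => Bool) t τ i.succ) - ∑ z, ν z * sg (z i.succ)) ^ 2 ≤
        p * (sg (τ i) - ∑ τ', ν₁ τ' * sg (τ' i)) ^ 2
        + (1-p) * (sg (τ i) - ∑ τ', ν₀ τ' * sg (τ' i)) ^ 2 := by
      intro i
      rw [hbar i.succ]
      simp only [Fin.cons_succ]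
      have : sg (τ i) - (p * (∑ τ', ν₁ τ' * sg (τ' i)) + (1-p) * (∑ τ', ν₀ τ' * sg (τ' i)))
          = p * (sg (τ i) - ∑ τ', ν₁ τ' * sg (τ' i))
            + (1-p) * (sg (τ i) - ∑ τ', ν₀ τ' * sg (τ' i)) := by ring
      rw [this]
      exact sq_convex_comb hp0 hp1
    rw [Finset.mul_sum, Finset.mul_sum, ← Finset.sum_add_distrib]
    exact add_le_add (le_refl _) (Finset.sum_le_sum fun i _ => hsucc i)
  have hRle : R ≤ p * (∑ τ', ν₁ τ' * f₁ τ'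
        + (1/8) * ∑ i, (sg (τ i) - ∑ τ', ν₁ τ' * sg (τ' i)) ^ 2)
      + (1-p) * (∑ τ', ν₀ τ' * f₀ τ'
        + (1/8) * ∑ i, (sg (τ i) - ∑ τ', ν₀ τ' * sg (τ' i)) ^ 2)
      + (1/8) * (sg t - (2*p-1)) ^ 2 := by
    rw [hR, hEf]
    have := mul_le_mul_of_nonneg_left hcost (by norm_num : (0:ℝ) ≤ 1/8)
    linarith
  have : Qt f (Fin.cons t τ) ≤ p * (Qt f₁ τ + ε/2) + (1-p) * (Qt f₀ τ + ε/2)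
      + (1/8) * (sg t - (2*p-1)) ^ 2 := by
    refine hQle.trans (hRle.trans ?_)
    have l1 := mul_le_mul_of_nonneg_left hr₁.le hp0
    have l0 := mul_le_mul_of_nonneg_left hr₀.le (by linarith : (0:ℝ) ≤ 1-p)
    linarith
  have hεε : p * (ε/2) + (1-p) * (ε/2) = ε/2 := by ring
  nlinarith [this]

lemma exp_rpow (X P : ℝ) : (Real.exp X) ^ P = Real.exp (P * X) := by
  rw [Real.rpow_def_of_pos (Real.exp_pos X), Real.log_exp, mul_comm]

lemma sum_holder {ι : Type*} [Fintype ι] [Nonempty ι] (u v : ι → ℝ)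
    (hu : ∀ i, 0 < u i) (hv : ∀ i, 0 < v i) {p : ℝ} (hp0 : 0 ≤ p) (hp1 : p ≤ 1) :
    ∑ i, (u i) ^ p * (v i) ^ (1 - p) ≤ (∑ i, u i) ^ p * (∑ i, v i) ^ (1 - p) := by
  set U := ∑ i, u i with hU
  set V := ∑ i, v i with hV
  have hUpos : 0 < U := Finset.sum_pos (fun i _ => hu i) univ_nonempty
  have hVpos : 0 < V := Finset.sum_pos (fun i _ => hv i) univ_nonempty
  have key : ∀ i : ι, (u i) ^ p * (v i) ^ (1 - p) ≤
      (p * (u i / U) + (1 - p) * (v i / V)) * (U ^ p * V ^ (1 - p)) := by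
    intro i
    have hgm := Real.geom_mean_le_arith_mean2_weighted hp0 (by linarith : (0:ℝ) ≤ 1 - p)
      (le_of_lt (div_pos (hu i) hUpos)) (le_of_lt (div_pos (hv i) hVpos)) (by ring)
    have hrw : (u i / U) ^ p * (v i / V) ^ (1 - p) =
        ((u i) ^ p * (v i) ^ (1 - p)) / (U ^ p * V ^ (1 - p)) := by
      rw [Real.div_rpow (le_of_lt (hu i)) (le_of_lt hUpos),
        Real.div_rpow (le_of_lt (hv i)) (le_of_lt hVpos)]
      ring
    rw [hrw] at hgm
    have hpos : 0 < U ^ p * V ^ (1 - p) :=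
      mul_pos (Real.rpow_pos_of_pos hUpos p) (Real.rpow_pos_of_pos hVpos (1-p))
    calc (u i) ^ p * (v i) ^ (1 - p)
        = ((u i) ^ p * (v i) ^ (1 - p)) / (U ^ p * V ^ (1 - p)) * (U ^ p * V ^ (1 - p)) := by
          field_simp
      _ ≤ (p * (u i / U) + (1 - p) * (v i / V)) * (U ^ p * V ^ (1 - p)) :=
          mul_le_mul_of_nonneg_right hgm (le_of_lt hpos)
  calc ∑ i, (u i) ^ p * (v i) ^ (1 - p)
      ≤ ∑ i, (p * (u i / U) + (1 - p) * (v i / V)) * (U ^ p * V ^ (1 - p)) :=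
        Finset.sum_le_sum fun i _ => key i
    _ = (p * (U / U) + (1 - p) * (V / V)) * (U ^ p * V ^ (1 - p)) := by
        rw [← Finset.sum_mul]
        congr 1
        rw [Finset.sum_add_distrib, ← Finset.mul_sum, ← Finset.mul_sum, ← Finset.sum_div,
          ← Finset.sum_div]
    _ = U ^ p * V ^ (1 - p) := by
        rw [div_self (ne_of_gt hUpos), div_self (ne_of_gt hVpos)]; ring

theorem master : ∀ {n : ℕ} (f : (Fin n → Bool) → ℝ),
    (∑ x, Real.exp (Qt f x)) * (∑ y, Real.exp (-f y)) ≤ 4 ^ n := by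
  intro n
  induction n with
  | zero =>
    intro f
    have key : ∀ x : Fin 0 → Bool, Real.exp (Qt f x) * Real.exp (-f x) ≤ 1 := by
      intro x
      rw [← Real.exp_add, ← Real.exp_zero]
      exact Real.exp_le_exp.2 (by linarith [Qt_le_self f x])
    rw [Fintype.sum_unique (fun x : Fin 0 → Bool => Real.exp (Qt f x)),
      Fintype.sum_unique (fun y : Fin 0 → Bool => Real.exp (-f y)), pow_zero]
    exact key _
  | succ n ih =>
    intro f
    set f₁ : (Fin n → Bool) → ℝ := fun y => f (Fin.cons true y) with hf₁
    set f₀ : (Fin n → Bool) → ℝ := fun y => f (Fin.cons false y) with hf₀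
    set S₁ := ∑ τ : Fin n → Bool, Real.exp (-f₁ τ) with hS₁
    set S₀ := ∑ τ : Fin n → Bool, Real.exp (-f₀ τ) with hS₀
    have hS₁pos : 0 < S₁ := Finset.sum_pos (fun i _ => Real.exp_pos _) univ_nonempty
    have hS₀pos : 0 < S₀ := Finset.sum_pos (fun i _ => Real.exp_pos _) univ_nonempty
    set A := -Real.log S₁ with hA
    set B := -Real.log S₀ with hB
    have hexpA : Real.exp (-A) = S₁ := by rw [hA, neg_neg, Real.exp_log hS₁pos]
    have hexpB : Real.exp (-B) = S₀ := by rw [hB, neg_neg, Real.exp_log hS₀pos]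
    obtain ⟨p, q, hp0, hp1, hq0, hq1, h2pt⟩ := two_point A B
    -- the key branch bound
    have branch : ∀ (t : Bool) (r : ℝ), 0 ≤ r → r ≤ 1 →
        ∑ τ : Fin n → Bool, Real.exp (Qt f (Fin.cons t τ)) ≤
          4 ^ n * Real.exp (r * A + (1 - r) * B + (1/8) * (sg t - (2*r - 1)) ^ 2) := by
      intro t r hr0 hr1
      have step1 : ∀ τ : Fin n → Bool, Real.exp (Qt f (Fin.cons t τ)) ≤
          (Real.exp (Qt f₁ τ)) ^ r * (Real.exp (Qt f₀ τ)) ^ (1 - r)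
            * Real.exp ((1/8) * (sg t - (2*r - 1)) ^ 2) := by
        intro τ
        rw [exp_rpow, exp_rpow, ← Real.exp_add, ← Real.exp_add]
        exact Real.exp_le_exp.2 (Qt_cons_le f t τ hr0 hr1)
      have step2 : ∑ τ : Fin n → Bool, Real.exp (Qt f (Fin.cons t τ)) ≤
          (∑ τ, Real.exp (Qt f₁ τ)) ^ r * (∑ τ, Real.exp (Qt f₀ τ)) ^ (1 - r)
            * Real.exp ((1/8) * (sg t - (2*r - 1)) ^ 2) := by
        calc ∑ τ : Fin n → Bool, Real.exp (Qt f (Fin.cons t τ))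
            ≤ ∑ τ : Fin n → Bool, (Real.exp (Qt f₁ τ)) ^ r * (Real.exp (Qt f₀ τ)) ^ (1 - r)
              * Real.exp ((1/8) * (sg t - (2*r - 1)) ^ 2) :=
              Finset.sum_le_sum fun τ _ => step1 τ
          _ = (∑ τ : Fin n → Bool, (Real.exp (Qt f₁ τ)) ^ r * (Real.exp (Qt f₀ τ)) ^ (1 - r))
              * Real.exp ((1/8) * (sg t - (2*r - 1)) ^ 2) := by rw [Finset.sum_mul]
          _ ≤ _ := by
              refine mul_le_mul_of_nonneg_right ?_ (le_of_lt (Real.exp_pos _))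
              exact sum_holder _ _ (fun τ => Real.exp_pos _) (fun τ => Real.exp_pos _) hr0 hr1
      have hE₁ : ∑ τ, Real.exp (Qt f₁ τ) ≤ 4 ^ n * Real.exp A := by
        have h := ih f₁
        have := mul_le_mul_of_nonneg_right h (le_of_lt (Real.exp_pos A))
        rw [mul_assoc, ← hS₁, ← hexpA, ← Real.exp_add] at this
        simpa using this
      have hE₀ : ∑ τ, Real.exp (Qt f₀ τ) ≤ 4 ^ n * Real.exp B := by
        have h := ih f₀
        have := mul_le_mul_of_nonneg_right h (le_of_lt (Real.exp_pos B))
        rw [mul_assoc, ← hS₀, ← hexpB, ← Real.exp_add] at this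
        simpa using this
      have hrpow : (∑ τ, Real.exp (Qt f₁ τ)) ^ r * (∑ τ, Real.exp (Qt f₀ τ)) ^ (1 - r) ≤
          (4 ^ n * Real.exp A) ^ r * (4 ^ n * Real.exp B) ^ (1 - r) := by
        have h1 : (0:ℝ) ≤ ∑ τ, Real.exp (Qt f₁ τ) :=
          Finset.sum_nonneg fun τ _ => le_of_lt (Real.exp_pos _)
        have h0 : (0:ℝ) ≤ ∑ τ, Real.exp (Qt f₀ τ) :=
          Finset.sum_nonneg fun τ _ => le_of_lt (Real.exp_pos _)
        exact mul_le_mul (Real.rpow_le_rpow h1 hE₁ hr0) (Real.rpow_le_rpow h0 hE₀ (by linarith))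
          (Real.rpow_nonneg h0 _) (Real.rpow_nonneg (by positivity) _)
      have hcollect : (4 ^ n * Real.exp A) ^ r * (4 ^ n * Real.exp B) ^ (1 - r)
          = 4 ^ n * Real.exp (r * A + (1 - r) * B) := by
        have h4 : (0:ℝ) ≤ 4 ^ n := by positivity
        rw [Real.mul_rpow h4 (le_of_lt (Real.exp_pos A)),
          Real.mul_rpow h4 (le_of_lt (Real.exp_pos B)), exp_rpow, exp_rpow]
        have : (4:ℝ) ^ (n:ℕ) = ((4:ℝ) ^ (n:ℕ) : ℝ) := rfl
        rw [show ((4:ℝ)^n) ^ r * Real.exp (r * A) * (((4:ℝ)^n) ^ (1-r) * Real.exp ((1-r) * B))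
            = (((4:ℝ)^n) ^ r * ((4:ℝ)^n) ^ (1-r)) * (Real.exp (r*A) * Real.exp ((1-r)*B)) by ring]
        rw [← Real.rpow_add (by positivity : (0:ℝ) < 4 ^ n), ← Real.exp_add]
        norm_num
      calc ∑ τ : Fin n → Bool, Real.exp (Qt f (Fin.cons t τ)) ≤ _ := step2
        _ ≤ (4 ^ n * Real.exp A) ^ r * (4 ^ n * Real.exp B) ^ (1 - r)
            * Real.exp ((1/8) * (sg t - (2*r - 1)) ^ 2) :=
            mul_le_mul_of_nonneg_right hrpow (le_of_lt (Real.exp_pos _))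
        _ = 4 ^ n * Real.exp (r * A + (1 - r) * B + (1/8) * (sg t - (2*r - 1)) ^ 2) := by
            rw [hcollect, mul_assoc, ← Real.exp_add]
    have hTrue := branch true p hp0 hp1
    have hFalse := branch false q hq0 hq1
    have hcostT : (1/8) * (sg true - (2*p - 1)) ^ 2 = (1 - p)^2/2 := by
      rw [sg_true]; ring
    have hcostF : (1/8) * (sg false - (2*q - 1)) ^ 2 = q^2/2 := by
      rw [sg_false]; ring
    rw [hcostT] at hTrue
    rw [hcostF] at hFalse
    have hsplitQ : ∑ x, Real.exp (Qt f x) =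
        (∑ τ : Fin n → Bool, Real.exp (Qt f (Fin.cons true τ)))
        + (∑ τ : Fin n → Bool, Real.exp (Qt f (Fin.cons false τ))) :=
      sum_cube_succ _
    have hsplitS : ∑ y, Real.exp (-f y) = S₁ + S₀ := sum_cube_succ _
    rw [hsplitQ, hsplitS, ← hexpA, ← hexpB]
    have hQsum : (∑ τ : Fin n → Bool, Real.exp (Qt f (Fin.cons true τ)))
        + (∑ τ : Fin n → Bool, Real.exp (Qt f (Fin.cons false τ))) ≤
        4 ^ n * (Real.exp (p * A + (1 - p) * B + (1-p)^2/2)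
          + Real.exp (q * A + (1 - q) * B + q^2/2)) := by
      rw [mul_add]; exact add_le_add hTrue hFalse
    have hpos2 : 0 < Real.exp (-A) + Real.exp (-B) := by positivity
    calc (∑ τ : Fin n → Bool, Real.exp (Qt f (Fin.cons true τ))
          + ∑ τ : Fin n → Bool, Real.exp (Qt f (Fin.cons false τ)))
          * (Real.exp (-A) + Real.exp (-B))
        ≤ (4 ^ n * (Real.exp (p * A + (1 - p) * B + (1-p)^2/2)
            + Real.exp (q * A + (1 - q) * B + q^2/2))) * (Real.exp (-A) + Real.exp (-B)) := by
          apply mul_le_mul_of_nonneg_right hQsum (le_of_lt hpos2)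
      _ = 4 ^ n * ((Real.exp (p * A + (1 - p) * B + (1-p)^2/2)
            + Real.exp (q * A + (1 - q) * B + q^2/2)) * (Real.exp (-A) + Real.exp (-B))) := by
          ring
      _ ≤ 4 ^ n * 4 := by
          apply mul_le_mul_of_nonneg_left h2pt (by positivity)
      _ = 4 ^ (n+1) := by ring

end


lemma cauchy_sum {D : ℕ} (f g : Fin D → ℝ) :
    ∑ j, f j * g j ≤ Real.sqrt (∑ j, f j ^ 2) * Real.sqrt (∑ j, g j ^ 2) := by
  have h := Finset.sum_mul_sq_le_sq_mul_sq univ f g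
  calc ∑ j, f j * g j ≤ |∑ j, f j * g j| := le_abs_self _
    _ = Real.sqrt ((∑ j, f j * g j) ^ 2) := (Real.sqrt_sq_eq_abs _).symm
    _ ≤ Real.sqrt ((∑ j, f j ^ 2) * ∑ j, g j ^ 2) := Real.sqrt_le_sqrt h
    _ = _ := Real.sqrt_mul (by positivity) _

lemma sqrt_sum_add_le {D : ℕ} (a b : Fin D → ℝ) :
    Real.sqrt (∑ j, (a j + b j) ^ 2) ≤
      Real.sqrt (∑ j, a j ^ 2) + Real.sqrt (∑ j, b j ^ 2) := by
  have hcs := cauchy_sum a b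
  have h1 : ∑ j, (a j + b j) ^ 2 ≤
      (Real.sqrt (∑ j, a j ^ 2) + Real.sqrt (∑ j, b j ^ 2)) ^ 2 := by
    have e1 : ∑ j, (a j + b j) ^ 2 = ∑ j, a j ^ 2 + 2 * ∑ j, a j * b j + ∑ j, b j ^ 2 := by
      rw [Finset.sum_congr rfl (fun j _ => by ring :
        ∀ j ∈ univ, (a j + b j) ^ 2 = a j ^ 2 + 2 * (a j * b j) + b j ^ 2)]
      rw [Finset.sum_add_distrib, Finset.sum_add_distrib, ← Finset.mul_sum]
    have e2 : (Real.sqrt (∑ j, a j ^ 2) + Real.sqrt (∑ j, b j ^ 2)) ^ 2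
        = ∑ j, a j ^ 2 + 2 * (Real.sqrt (∑ j, a j ^ 2) * Real.sqrt (∑ j, b j ^ 2))
          + ∑ j, b j ^ 2 := by
      rw [add_sq, Real.sq_sqrt (by positivity), Real.sq_sqrt (by positivity)]
      ring
    rw [e1, e2]
    linarith
  calc Real.sqrt (∑ j, (a j + b j) ^ 2) ≤
      Real.sqrt ((Real.sqrt (∑ j, a j ^ 2) + Real.sqrt (∑ j, b j ^ 2)) ^ 2) :=
        Real.sqrt_le_sqrt h1
    _ = _ := Real.sqrt_sq (by positivity)

lemma norm_sum_le_weighted {D : ℕ} {ι : Type*} [Fintype ι] (c : ι → ℝ) (hc : ∀ y, 0 ≤ c y)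
    (V : ι → Fin D → ℝ) :
    Real.sqrt (∑ j, (∑ y, c y * V y j) ^ 2) ≤ ∑ y, c y * Real.sqrt (∑ j, V y j ^ 2) := by
  set S : Fin D → ℝ := fun j => ∑ y, c y * V y j with hS
  set NS := Real.sqrt (∑ j, S j ^ 2) with hNS
  have hRHS0 : 0 ≤ ∑ y, c y * Real.sqrt (∑ j, V y j ^ 2) :=
    Finset.sum_nonneg fun y _ => mul_nonneg (hc y) (Real.sqrt_nonneg _)
  rcases eq_or_lt_of_le (Real.sqrt_nonneg (∑ j, S j ^ 2)) with h0 | hpos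
  · rw [hNS, ← h0]; exact hRHS0
  · have hNS2 : NS ^ 2 = ∑ j, S j ^ 2 := Real.sq_sqrt (by positivity)
    have key : NS ^ 2 = ∑ y, c y * (∑ j, V y j * S j) := by
      rw [hNS2]
      have e1 : ∀ j, S j ^ 2 = ∑ y, c y * (V y j * S j) := by
        intro j
        rw [pow_two, hS]
        rw [Finset.sum_mul]
        exact Finset.sum_congr rfl fun y _ => by ring
      rw [Finset.sum_congr rfl (fun j _ => e1 j), Finset.sum_comm]
      exact Finset.sum_congr rfl fun y _ => by rw [Finset.mul_sum]
    have hub : ∀ y : ι, c y * (∑ j, V y j * S j) ≤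
        c y * (Real.sqrt (∑ j, V y j ^ 2) * NS) := fun y =>
      mul_le_mul_of_nonneg_left (cauchy_sum (fun j => V y j) S) (hc y)
    have h2 : NS * NS ≤ (∑ y, c y * Real.sqrt (∑ j, V y j ^ 2)) * NS := by
      rw [← pow_two, key, Finset.sum_mul]
      exact Finset.sum_le_sum fun y _ => (hub y).trans_eq (by ring)
    exact le_of_mul_le_mul_right h2 hpos

lemma bessel {n D : ℕ} (φ : Fin D → Fin n → ℝ)
    (horth : ∀ j j', (∑ i, φ j i * φ j' i) = if j = j' then 1 else 0) (u : Fin n → ℝ) :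
    ∑ j, (∑ i, u i * φ j i) ^ 2 ≤ ∑ i, u i ^ 2 := by
  set c : Fin D → ℝ := fun j => ∑ i, u i * φ j i with hc
  have hM : ∑ i, u i * (∑ j, c j * φ j i) = ∑ j, c j ^ 2 := by
    have e1 : ∀ i, u i * (∑ j, c j * φ j i) = ∑ j, c j * (u i * φ j i) := by
      intro i; rw [Finset.mul_sum]; exact Finset.sum_congr rfl fun j _ => by ring
    rw [Finset.sum_congr rfl fun i _ => e1 i, Finset.sum_comm]
    refine Finset.sum_congr rfl fun j _ => ?_
    rw [← Finset.mul_sum, pow_two]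
  have hQ : ∑ i, (∑ j, c j * φ j i) ^ 2 = ∑ j, c j ^ 2 := by
    have e1 : ∀ i, (∑ j, c j * φ j i) ^ 2
        = ∑ j, ∑ j', (c j * c j') * (φ j i * φ j' i) := by
      intro i
      rw [pow_two, Finset.sum_mul_sum]
      exact Finset.sum_congr rfl fun j _ => Finset.sum_congr rfl fun j' _ => by ring
    rw [Finset.sum_congr rfl fun i _ => e1 i, Finset.sum_comm]
    refine Finset.sum_congr rfl fun j _ => ?_
    have e2 : ∀ j, ∑ i, ∑ j', (c j * c j') * (φ j i * φ j' i) = c j ^ 2 := by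
      intro j
      rw [Finset.sum_comm]
      have e3 : ∀ j', ∑ i, (c j * c j') * (φ j i * φ j' i)
          = (c j * c j') * (if j = j' then (1:ℝ) else 0) := by
        intro j'
        rw [← Finset.mul_sum, horth j j']
      rw [Finset.sum_congr rfl fun j' _ => e3 j']
      simp [pow_two]
    exact e2 j
  have hpos : 0 ≤ ∑ i, (u i - ∑ j, c j * φ j i) ^ 2 :=
    Finset.sum_nonneg fun i _ => sq_nonneg _
  have expand : ∑ i, (u i - ∑ j, c j * φ j i) ^ 2
      = ∑ i, u i ^ 2 - 2 * ∑ i, u i * (∑ j, c j * φ j i) + ∑ i, (∑ j, c j * φ j i) ^ 2 := by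
    rw [Finset.sum_congr rfl (fun i _ => by ring :
      ∀ i ∈ univ, (u i - ∑ j, c j * φ j i) ^ 2
        = u i ^ 2 - 2 * (u i * (∑ j, c j * φ j i)) + (∑ j, c j * φ j i) ^ 2)]
    rw [Finset.sum_add_distrib, Finset.sum_sub_distrib, ← Finset.mul_sum]
  rw [expand, hM, hQ] at hpos
  calc ∑ j, (∑ i, u i * φ j i) ^ 2 = ∑ j, c j ^ 2 := rfl
    _ ≤ ∑ i, u i ^ 2 := by linarith


section Application

variable {n D : ℕ}

/-- the norm statistic on the discrete cube -/
noncomputable def gfun (φ : Fin D → Fin n → ℝ) : (Fin n → Bool) → ℝ :=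
  fun σ => Real.sqrt (∑ j, (∑ i, sg (σ i) * φ j i) ^ 2)

lemma gfun_nonneg (φ : Fin D → Fin n → ℝ) (σ : Fin n → Bool) : 0 ≤ gfun φ σ :=
  Real.sqrt_nonneg _

lemma Qt_ge (φ : Fin D → Fin n → ℝ)
    (horth : ∀ j j', (∑ i, φ j i * φ j' i) = if j = j' then 1 else 0)
    {lam : ℝ} (hlam : 0 ≤ lam) (x : Fin n → Bool) :
    lam * gfun φ x - 2 * lam ^ 2 ≤ Qt (fun σ => lam * gfun φ σ) x := by
  apply le_csInf ⟨_, Qt_set_nonempty _ x⟩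
  rintro r ⟨ν, hν0, hν1, rfl⟩
  set b : Fin n → ℝ := fun i => ∑ y, ν y * sg (y i) with hb
  set W : Fin D → ℝ := fun j => ∑ i, b i * φ j i with hW
  have hWsum : ∀ j, W j = ∑ y, ν y * (∑ i, sg (y i) * φ j i) := by
    intro j
    rw [hW]
    simp only [hb]
    have e1 : ∀ i, (∑ y, ν y * sg (y i)) * φ j i = ∑ y, ν y * (sg (y i) * φ j i) := by
      intro i; rw [Finset.sum_mul]; exact Finset.sum_congr rfl fun y _ => by ring
    rw [Finset.sum_congr rfl fun i _ => e1 i, Finset.sum_comm]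
    exact Finset.sum_congr rfl fun y _ => by rw [Finset.mul_sum]
  have h1 : Real.sqrt (∑ j, W j ^ 2) ≤ ∑ y, ν y * gfun φ y := by
    have h := norm_sum_le_weighted ν hν0 (fun y j => ∑ i, sg (y i) * φ j i)
    have e : ∑ j, W j ^ 2 = ∑ j, (∑ y, ν y * (∑ i, sg (y i) * φ j i)) ^ 2 :=
      Finset.sum_congr rfl fun j _ => by rw [hWsum j]
    rw [e]
    exact h
  have h2 : gfun φ x ≤ Real.sqrt (∑ j, W j ^ 2) +
      Real.sqrt (∑ i, (sg (x i) - b i) ^ 2) := by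
    have hdiff : ∀ j, (∑ i, sg (x i) * φ j i)
        = W j + (∑ i, (sg (x i) - b i) * φ j i) := by
      intro j
      rw [hW, ← Finset.sum_add_distrib]
      exact Finset.sum_congr rfl fun i _ => by ring
    have e : gfun φ x = Real.sqrt (∑ j, (W j + ∑ i, (sg (x i) - b i) * φ j i) ^ 2) := by
      unfold gfun
      congr 1
      exact Finset.sum_congr rfl fun j _ => by rw [hdiff j]
    rw [e]
    refine (sqrt_sum_add_le W _).trans ?_
    gcongr
    exact bessel φ horth _
  set rr := Real.sqrt (∑ i, (sg (x i) - b i) ^ 2) with hrr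
  have hrr2 : rr ^ 2 = ∑ i, (sg (x i) - b i) ^ 2 := Real.sq_sqrt (by positivity)
  have h3 : lam * rr ≤ 2 * lam ^ 2 + (1/8) * rr ^ 2 := by
    nlinarith [sq_nonneg (rr - 4 * lam)]
  have hval : ∑ y, ν y * (lam * gfun φ y) = lam * ∑ y, ν y * gfun φ y := by
    rw [Finset.mul_sum]; exact Finset.sum_congr rfl fun y _ => by ring
  have hscale := mul_le_mul_of_nonneg_left h1 hlam
  have hscale2 := mul_le_mul_of_nonneg_left h2 hlam
  rw [hval, ← hrr2]
  nlinarith [hscale, hscale2, h3]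

lemma card_cube (n : ℕ) : (Fintype.card (Fin n → Bool)) = 2 ^ n := by
  simp [Fintype.card_fun]

lemma sum_exp_jensen {n : ℕ} (h : (Fin n → Bool) → ℝ) :
    Real.exp ((∑ σ, h σ) / 2 ^ n) ≤ (∑ σ, Real.exp (h σ)) / 2 ^ n := by
  have hw : ∑ _σ : Fin n → Bool, ((2:ℝ) ^ n)⁻¹ = 1 := by
    rw [Finset.sum_const, nsmul_eq_mul]
    simp [card_cube n]
  have hj := convexOn_exp.map_sum_le (t := univ)
    (w := fun _ : Fin n → Bool => ((2:ℝ)^n)⁻¹) (p := h)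
    (fun _ _ => by positivity) hw (fun _ _ => Set.mem_univ _)
  simp only [smul_eq_mul] at hj
  have e1 : ∑ σ : Fin n → Bool, ((2:ℝ)^n)⁻¹ * h σ = (∑ σ, h σ) / 2 ^ n := by
    rw [← Finset.mul_sum]; ring
  have e2 : ∑ σ : Fin n → Bool, ((2:ℝ)^n)⁻¹ * Real.exp (h σ)
      = (∑ σ, Real.exp (h σ)) / 2 ^ n := by
    rw [← Finset.mul_sum]; ring
  rw [e1, e2] at hj
  exact hj

section MGF

variable {n D : ℕ} (φ : Fin D → Fin n → ℝ)

lemma mgf_product (horth : ∀ j j', (∑ i, φ j i * φ j' i) = if j = j' then 1 else 0)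
    {lam : ℝ} (hlam : 0 ≤ lam) :
    (∑ σ, Real.exp (lam * gfun φ σ)) * (∑ σ, Real.exp (-(lam * gfun φ σ)))
      ≤ Real.exp (2 * lam ^ 2) * 4 ^ n := by
  have hm := master (fun σ => lam * gfun φ σ)
  have h1 : (∑ σ, Real.exp (lam * gfun φ σ - 2 * lam ^ 2))
      ≤ ∑ σ, Real.exp (Qt (fun σ => lam * gfun φ σ) σ) :=
    Finset.sum_le_sum fun σ _ => Real.exp_le_exp.2 (Qt_ge φ horth hlam σ)
  have h2 : ∑ σ : Fin n → Bool, Real.exp (lam * gfun φ σ - 2 * lam ^ 2)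
      = Real.exp (-(2 * lam ^ 2)) * ∑ σ, Real.exp (lam * gfun φ σ) := by
    rw [Finset.mul_sum]
    exact Finset.sum_congr rfl fun σ _ => by rw [← Real.exp_add]; ring_nf
  have hS0 : (0:ℝ) ≤ ∑ σ, Real.exp (-(lam * gfun φ σ)) := by positivity
  have key := (mul_le_mul_of_nonneg_right h1 hS0).trans hm
  rw [h2] at key
  have hfin := mul_le_mul_of_nonneg_left key (le_of_lt (Real.exp_pos (2 * lam ^ 2)))
  have e3 : Real.exp (2 * lam ^ 2) * Real.exp (-(2 * lam ^ 2)) = 1 := by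
    rw [← Real.exp_add]; simp
  calc (∑ σ, Real.exp (lam * gfun φ σ)) * (∑ σ, Real.exp (-(lam * gfun φ σ)))
      = Real.exp (2 * lam ^ 2) * ((Real.exp (-(2 * lam ^ 2))
        * (∑ σ, Real.exp (lam * gfun φ σ))) * (∑ σ, Real.exp (-(lam * gfun φ σ)))) := by
        rw [show Real.exp (2 * lam ^ 2) * ((Real.exp (-(2 * lam ^ 2))
          * (∑ σ, Real.exp (lam * gfun φ σ))) * (∑ σ, Real.exp (-(lam * gfun φ σ))))
          = (Real.exp (2 * lam ^ 2) * Real.exp (-(2 * lam ^ 2)))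
            * ((∑ σ, Real.exp (lam * gfun φ σ)) * (∑ σ, Real.exp (-(lam * gfun φ σ)))) from by
            ring, e3, one_mul]
    _ ≤ Real.exp (2 * lam ^ 2) * 4 ^ n := hfin
  
lemma sum_exp_pos_le (horth : ∀ j j', (∑ i, φ j i * φ j' i) = if j = j' then 1 else 0)
    {lam : ℝ} (hlam : 0 ≤ lam) :
    (∑ σ, Real.exp (lam * gfun φ σ))
      ≤ 2 ^ n * Real.exp (lam * ((∑ σ, gfun φ σ) / 2 ^ n) + 2 * lam ^ 2) := by
  set m := (∑ σ, gfun φ σ) / 2 ^ n with hm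
  have hjen : (2:ℝ) ^ n * Real.exp (-(lam * m)) ≤ ∑ σ, Real.exp (-(lam * gfun φ σ)) := by
    have := sum_exp_jensen (fun σ => -(lam * gfun φ σ))
    have e : (∑ σ : Fin n → Bool, -(lam * gfun φ σ)) / 2 ^ n = -(lam * m) := by
      rw [Finset.sum_neg_distrib, ← Finset.mul_sum, hm]
      ring
    rw [e] at this
    have h2n : (0:ℝ) < 2 ^ n := by positivity
    rw [le_div_iff₀ h2n] at this
    linarith [this]
  have hprod := mgf_product φ horth hlam
  have hboth : (∑ σ, Real.exp (lam * gfun φ σ)) * ((2:ℝ) ^ n * Real.exp (-(lam * m)))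
      ≤ Real.exp (2 * lam ^ 2) * 4 ^ n := by
    refine le_trans (mul_le_mul_of_nonneg_left hjen (by positivity)) hprod
  have hpos : (0:ℝ) < 2 ^ n * Real.exp (-(lam * m)) := by positivity
  rw [← le_div_iff₀ hpos] at hboth
  refine hboth.trans_eq ?_
  rw [Real.exp_add, Real.exp_neg]
  field_simp
  rw [show (4:ℝ) ^ n = 2 ^ n * 2 ^ n from by rw [← mul_pow]; norm_num]
  ring

lemma sum_exp_neg_le (horth : ∀ j j', (∑ i, φ j i * φ j' i) = if j = j' then 1 else 0)
    {lam : ℝ} (hlam : 0 ≤ lam) :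
    (∑ σ, Real.exp (-(lam * gfun φ σ)))
      ≤ 2 ^ n * Real.exp (-(lam * ((∑ σ, gfun φ σ) / 2 ^ n)) + 2 * lam ^ 2) := by
  set m := (∑ σ, gfun φ σ) / 2 ^ n with hm
  have hjen : (2:ℝ) ^ n * Real.exp (lam * m) ≤ ∑ σ, Real.exp (lam * gfun φ σ) := by
    have := sum_exp_jensen (fun σ => lam * gfun φ σ)
    have e : (∑ σ : Fin n → Bool, lam * gfun φ σ) / 2 ^ n = lam * m := by
      rw [← Finset.mul_sum, hm]; ring
    rw [e] at this
    have h2n : (0:ℝ) < 2 ^ n := by positivity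
    rw [le_div_iff₀ h2n] at this
    linarith [this]
  have hprod := mgf_product φ horth hlam
  have hboth : ((2:ℝ) ^ n * Real.exp (lam * m)) * (∑ σ, Real.exp (-(lam * gfun φ σ)))
      ≤ Real.exp (2 * lam ^ 2) * 4 ^ n := by
    refine le_trans (mul_le_mul_of_nonneg_right hjen (by positivity)) hprod
  have hpos : (0:ℝ) < 2 ^ n * Real.exp (lam * m) := by positivity
  rw [mul_comm, ← le_div_iff₀ hpos] at hboth
  refine hboth.trans_eq ?_
  rw [Real.exp_add, Real.exp_neg]
  field_simp
  rw [show (4:ℝ) ^ n = 2 ^ n * 2 ^ n from by rw [← mul_pow]; norm_num]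
  ring

end MGF

end Application

section Variance

def cflip {n : ℕ} (i : Fin n) (σ : Fin n → Bool) : Fin n → Bool :=
  Function.update σ i (!(σ i))

lemma cflip_apply_self {n : ℕ} (i : Fin n) (σ : Fin n → Bool) : cflip i σ i = !(σ i) :=
  Function.update_self i _ σ

lemma cflip_apply_ne {n : ℕ} {i k : Fin n} (h : k ≠ i) (σ : Fin n → Bool) :
    cflip i σ k = σ k := Function.update_of_ne h _ σ

lemma cflip_invol {n : ℕ} (i : Fin n) : Function.Involutive (cflip i) := by
  intro σ
  funext k
  by_cases h : k = i
  · subst h; rw [cflip_apply_self, cflip_apply_self, Bool.not_not]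
  · rw [cflip_apply_ne h, cflip_apply_ne h]

lemma sg_not (b : Bool) : sg (!b) = -sg b := by cases b <;> simp [sg]

lemma sg_sq (b : Bool) : sg b ^ 2 = 1 := by cases b <;> simp [sg]

lemma cflip_zero_cons {n : ℕ} (t : Bool) (τ : Fin n → Bool) :
    cflip 0 (Fin.cons t τ) = Fin.cons (!t) τ := by
  funext k
  cases k using Fin.cases with
  | zero => rw [show ((0:Fin (n+1))) = (0:Fin (n+1)) from rfl]
            rw [cflip_apply_self]
            simp
  | succ k' =>
      rw [cflip_apply_ne (Fin.succ_ne_zero k')]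
      simp

lemma cflip_succ_cons {n : ℕ} (i : Fin n) (t : Bool) (τ : Fin n → Bool) :
    cflip i.succ (Fin.cons t τ) = Fin.cons t (cflip i τ) := by
  funext k
  cases k using Fin.cases with
  | zero =>
      rw [cflip_apply_ne (Fin.succ_ne_zero i).symm]
      simp
  | succ k' =>
      by_cases h : k' = i
      · subst h
        rw [cflip_apply_self]
        simp [cflip_apply_self]
      · rw [cflip_apply_ne (fun hh => h (Fin.succ_injective _ hh))]
        simp [cflip_apply_ne h]

theorem efron_stein : ∀ {n : ℕ} (f : (Fin n → Bool) → ℝ),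
    2 ^ n * (∑ σ, f σ ^ 2) - (∑ σ, f σ) ^ 2
      ≤ (1/4) * 2 ^ n * (∑ σ, ∑ i, (f σ - f (cflip i σ)) ^ 2) := by
  intro n
  induction n with
  | zero =>
    intro f
    rw [Fintype.sum_unique (fun σ : Fin 0 → Bool => f σ ^ 2),
      Fintype.sum_unique f,
      Fintype.sum_unique (fun σ : Fin 0 → Bool => ∑ i, (f σ - f (cflip i σ)) ^ 2)]
    simp
  | succ n ih =>
    intro f
    set f₁ : (Fin n → Bool) → ℝ := fun τ => f (Fin.cons true τ) with hf₁
    set f₀ : (Fin n → Bool) → ℝ := fun τ => f (Fin.cons false τ) with hf₀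
    set T : ℝ := 2 ^ n with hT
    have hTpos : (0:ℝ) < T := by rw [hT]; positivity
    have A1 : ∑ σ, f σ = (∑ τ, f₁ τ) + (∑ τ, f₀ τ) := sum_cube_succ f
    have A2 : ∑ σ, f σ ^ 2 = (∑ τ, f₁ τ ^ 2) + (∑ τ, f₀ τ ^ 2) :=
      sum_cube_succ (fun σ => f σ ^ 2)
    have A3 : ∑ σ, ∑ i, (f σ - f (cflip i σ)) ^ 2
        = 2 * (∑ τ, (f₁ τ - f₀ τ) ^ 2)
          + ((∑ τ, ∑ i, (f₁ τ - f₁ (cflip i τ)) ^ 2)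
            + (∑ τ, ∑ i, (f₀ τ - f₀ (cflip i τ)) ^ 2)) := by
      rw [sum_cube_succ (fun σ => ∑ i, (f σ - f (cflip i σ)) ^ 2)]
      have e1 : ∀ τ : Fin n → Bool, (∑ i, (f (Fin.cons true τ) - f (cflip i (Fin.cons true τ))) ^ 2)
          = (f₁ τ - f₀ τ) ^ 2 + ∑ i : Fin n, (f₁ τ - f₁ (cflip i τ)) ^ 2 := by
        intro τ
        rw [Fin.sum_univ_succ]
        congr 1
        · rw [cflip_zero_cons]; simp; rfl
        · refine Finset.sum_congr rfl fun i _ => ?_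
          rw [cflip_succ_cons]
      have e0 : ∀ τ : Fin n → Bool, (∑ i, (f (Fin.cons false τ) - f (cflip i (Fin.cons false τ))) ^ 2)
          = (f₀ τ - f₁ τ) ^ 2 + ∑ i : Fin n, (f₀ τ - f₀ (cflip i τ)) ^ 2 := by
        intro τ
        rw [Fin.sum_univ_succ]
        congr 1
        · rw [cflip_zero_cons]; simp; rfl
        · refine Finset.sum_congr rfl fun i _ => ?_
          rw [cflip_succ_cons]
      rw [Finset.sum_congr rfl fun τ _ => e1 τ, Finset.sum_congr rfl fun τ _ => e0 τ,
        Finset.sum_add_distrib, Finset.sum_add_distrib]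
      have : ∑ τ, (f₀ τ - f₁ τ) ^ 2 = ∑ τ, (f₁ τ - f₀ τ) ^ 2 :=
        Finset.sum_congr rfl fun τ _ => by ring
      rw [this]
      ring
    have ih1 := ih f₁
    have ih0 := ih f₀
    have CS : ((∑ τ, f₁ τ) - (∑ τ, f₀ τ)) ^ 2 ≤ T * ∑ τ, (f₁ τ - f₀ τ) ^ 2 := by
      have h := Finset.sum_mul_sq_le_sq_mul_sq univ (fun τ => f₁ τ - f₀ τ)
        (fun _ : Fin n → Bool => (1:ℝ))
      simp only [mul_one, one_pow] at h
      rw [← Finset.sum_sub_distrib]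
      have hcard : ∑ _τ : Fin n → Bool, (1:ℝ) = T := by
        rw [Finset.sum_const, nsmul_eq_mul, hT]
        simp [card_cube n]
      rw [hcard] at h
      calc (∑ τ, (f₁ τ - f₀ τ)) ^ 2 ≤ (∑ τ, (f₁ τ - f₀ τ) ^ 2) * T := h
        _ = T * ∑ τ, (f₁ τ - f₀ τ) ^ 2 := by ring
    rw [A1, A2, A3]
    have hTT : (2:ℝ) ^ (n+1) = 2 * T := by rw [hT]; ring
    rw [hTT]
    nlinarith [ih1, ih0, CS, hTpos]

end Variance

section VarBound

variable {n D : ℕ}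

lemma sum_sq_lin (φ : Fin D → Fin n → ℝ)
    (horth : ∀ j j', (∑ i, φ j i * φ j' i) = if j = j' then 1 else 0)
    (v : Fin D → ℝ) :
    ∑ i, (∑ j, v j * φ j i) ^ 2 = ∑ j, v j ^ 2 := by
  have e1 : ∀ i, (∑ j, v j * φ j i) ^ 2
      = ∑ j, ∑ j', (v j * v j') * (φ j i * φ j' i) := by
    intro i
    rw [pow_two, Finset.sum_mul_sum]
    exact Finset.sum_congr rfl fun j _ => Finset.sum_congr rfl fun j' _ => by ring
  rw [Finset.sum_congr rfl fun i _ => e1 i, Finset.sum_comm]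
  refine Finset.sum_congr rfl fun j _ => ?_
  rw [Finset.sum_comm]
  have e3 : ∀ j', ∑ i, (v j * v j') * (φ j i * φ j' i)
      = (v j * v j') * (if j = j' then (1:ℝ) else 0) := by
    intro j'
    rw [← Finset.mul_sum, horth j j']
  rw [Finset.sum_congr rfl fun j' _ => e3 j']
  simp [pow_two]

lemma max_sq_le {x y : ℝ} (h : x ≤ y) : max x 0 ^ 2 ≤ y ^ 2 := by
  have h0 : 0 ≤ max x 0 := le_max_right x 0
  have h1 : max x 0 ≤ |y| := max_le (h.trans (le_abs_self y)) (abs_nonneg y)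
  calc max x 0 ^ 2 ≤ |y| ^ 2 := by nlinarith
    _ = y ^ 2 := sq_abs y

lemma sqrt_sub_sqrt_le (v v' : Fin D → ℝ) (hpos : 0 < Real.sqrt (∑ j, v j ^ 2)) :
    Real.sqrt (∑ j, v j ^ 2) - Real.sqrt (∑ j, v' j ^ 2)
      ≤ (∑ j, v j * (v j - v' j)) / Real.sqrt (∑ j, v j ^ 2) := by
  set S := Real.sqrt (∑ j, v j ^ 2) with hS
  have hS2 : S ^ 2 = ∑ j, v j ^ 2 := Real.sq_sqrt (by positivity)
  have hcs := cauchy_sum v v'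
  have h1 : (∑ j, v j * v' j) / S ≤ Real.sqrt (∑ j, v' j ^ 2) := by
    rw [div_le_iff₀ hpos]
    calc ∑ j, v j * v' j ≤ S * Real.sqrt (∑ j, v' j ^ 2) := hcs
      _ = Real.sqrt (∑ j, v' j ^ 2) * S := by ring
  have e : ∑ j, v j * (v j - v' j) = (∑ j, v j ^ 2) - ∑ j, v j * v' j := by
    rw [← Finset.sum_sub_distrib]
    exact Finset.sum_congr rfl fun j _ => by ring
  rw [e, ← hS2]
  have : S - (∑ j, v j * v' j) / S = (S ^ 2 - ∑ j, v j * v' j) / S := by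
    field_simp
  linarith [this, h1]

lemma grad_bound (φ : Fin D → Fin n → ℝ)
    (horth : ∀ j j', (∑ i, φ j i * φ j' i) = if j = j' then 1 else 0)
    (σ : Fin n → Bool) :
    ∑ i, max (gfun φ σ - gfun φ (cflip i σ)) 0 ^ 2 ≤ 4 := by
  set v : Fin D → ℝ := fun j => ∑ i, sg (σ i) * φ j i with hv
  have hflipV : ∀ (i : Fin n) (j : Fin D),
      (∑ i', sg (cflip i σ i') * φ j i') = v j - 2 * sg (σ i) * φ j i := by
    intro i j
    have e : ∀ i', sg (cflip i σ i') * φ j i'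
        = sg (σ i') * φ j i' + (if i' = i then -(2 * sg (σ i) * φ j i) else 0) := by
      intro i'
      by_cases h : i' = i
      · subst h
        rw [cflip_apply_self, sg_not]
        simp; ring
      · rw [cflip_apply_ne h]
        simp [h]
    rw [Finset.sum_congr rfl fun i' _ => e i', Finset.sum_add_distrib]
    rw [Finset.sum_ite_eq' univ i (fun _ => -(2 * sg (σ i) * φ j i))]
    simp [hv]
    ring
  have hgflip : ∀ i : Fin n, gfun φ (cflip i σ)
      = Real.sqrt (∑ j, (v j - 2 * sg (σ i) * φ j i) ^ 2) := by
    intro i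
    unfold gfun
    congr 1
    exact Finset.sum_congr rfl fun j _ => by rw [hflipV i j]
  rcases eq_or_lt_of_le (Real.sqrt_nonneg (∑ j, v j ^ 2)) with h0 | hpos
  · have hg0 : gfun φ σ = 0 := by
      unfold gfun
      rw [show (∑ j, (∑ i, sg (σ i) * φ j i) ^ 2) = ∑ j, v j ^ 2 from rfl, ← h0]
    have hz : ∀ i : Fin n, max (gfun φ σ - gfun φ (cflip i σ)) 0 = 0 := by
      intro i
      apply max_eq_right
      rw [hg0]
      simp [gfun_nonneg]
    rw [Finset.sum_congr rfl fun i _ => by rw [hz i]]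
    simp
  · set c : Fin n → ℝ := fun i => ∑ j, v j * φ j i with hc
    have hsumc : ∑ i, c i ^ 2 = ∑ j, v j ^ 2 := sum_sq_lin φ horth v
    have hs2 : Real.sqrt (∑ j, v j ^ 2) ^ 2 = ∑ j, v j ^ 2 := Real.sq_sqrt (by positivity)
    have hspos : 0 < ∑ j, v j ^ 2 := by nlinarith [hpos]
    have key : ∀ i : Fin n, max (gfun φ σ - gfun φ (cflip i σ)) 0 ^ 2
        ≤ 4 * c i ^ 2 / (∑ j, v j ^ 2) := by
      intro i
      have hΔ : gfun φ σ - gfun φ (cflip i σ)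
          ≤ (2 * sg (σ i) * c i) / Real.sqrt (∑ j, v j ^ 2) := by
        rw [hgflip i]
        have hd := sqrt_sub_sqrt_le v (fun j => v j - 2 * sg (σ i) * φ j i) hpos
        have e : ∑ j, v j * (v j - (v j - 2 * sg (σ i) * φ j i)) = 2 * sg (σ i) * c i := by
          have e0 : ∀ j, v j * (v j - (v j - 2 * sg (σ i) * φ j i))
              = 2 * sg (σ i) * (v j * φ j i) := fun j => by ring
          rw [Finset.sum_congr rfl fun j _ => e0 j, ← Finset.mul_sum, hc]
        rw [e] at hd
        exact hd
      refine (max_sq_le hΔ).trans ?_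
      rw [div_pow, mul_pow, mul_pow, sg_sq, hs2]
      rw [show (2:ℝ)^2 * 1 * c i ^ 2 = 4 * c i ^ 2 from by ring]
    calc ∑ i, max (gfun φ σ - gfun φ (cflip i σ)) 0 ^ 2
        ≤ ∑ i, 4 * c i ^ 2 / (∑ j, v j ^ 2) := Finset.sum_le_sum fun i _ => key i
      _ = 4 / (∑ j, v j ^ 2) * ∑ i, c i ^ 2 := by
          rw [Finset.mul_sum]
          exact Finset.sum_congr rfl fun i _ => by ring
      _ = 4 := by rw [hsumc]; field_simp
  
lemma sq_eq_maxsq (x : ℝ) : x ^ 2 = max x 0 ^ 2 + max (-x) 0 ^ 2 := by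
  rcases le_total x 0 with h | h
  · rw [max_eq_right h, max_eq_left (by linarith)]
    ring
  · rw [max_eq_left h, max_eq_right (by linarith)]
    ring

lemma edge_sym (f : (Fin n → Bool) → ℝ) (i : Fin n) :
    ∑ σ, (f σ - f (cflip i σ)) ^ 2 = 2 * ∑ σ, max (f σ - f (cflip i σ)) 0 ^ 2 := by
  have h1 : ∑ σ, (f σ - f (cflip i σ)) ^ 2
      = ∑ σ, (max (f σ - f (cflip i σ)) 0 ^ 2 + max (f (cflip i σ) - f σ) 0 ^ 2) := by
    refine Finset.sum_congr rfl fun σ _ => ?_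
    have := sq_eq_maxsq (f σ - f (cflip i σ))
    rw [show -(f σ - f (cflip i σ)) = f (cflip i σ) - f σ from by ring] at this
    exact this
  have h2 : ∑ σ, max (f (cflip i σ) - f σ) 0 ^ 2
      = ∑ σ, max (f σ - f (cflip i σ)) 0 ^ 2 := by
    have heq := Equiv.sum_comp ((cflip_invol i).toPerm)
      (fun σ => max (f σ - f (cflip i σ)) 0 ^ 2)
    rw [← heq]
    refine Finset.sum_congr rfl fun σ _ => ?_
    have hcc : cflip i (cflip i σ) = σ := cflip_invol i σ
    show max (f (cflip i σ) - f σ) 0 ^ 2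
      = max (f (cflip i σ) - f (cflip i (cflip i σ))) 0 ^ 2
    rw [hcc]
  rw [h1, Finset.sum_add_distrib, h2]
  ring

lemma sg_orth (i i' : Fin n) :
    ∑ σ : Fin n → Bool, sg (σ i) * sg (σ i') = if i = i' then (2:ℝ) ^ n else 0 := by
  by_cases h : i = i'
  · subst h
    rw [if_pos rfl]
    have : ∀ σ : Fin n → Bool, sg (σ i) * sg (σ i) = 1 := by
      intro σ; have := sg_sq (σ i); nlinarith [this]
    rw [Finset.sum_congr rfl fun σ _ => this σ, Finset.sum_const, nsmul_eq_mul]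
    simp [card_cube n]
  · rw [if_neg h]
    refine Finset.sum_involution (fun σ _ => cflip i σ) ?_ ?_ (fun σ _ => mem_univ _) ?_
    · intro σ _
      rw [cflip_apply_self, cflip_apply_ne (fun hh => h hh.symm), sg_not]
      ring
    · intro σ _ _
      intro heq
      have := congrFun heq i
      rw [cflip_apply_self] at this
      exact (Bool.not_ne_self (σ i)) this
    · intro σ _
      exact cflip_invol i σ

lemma sum_sq_g (φ : Fin D → Fin n → ℝ)
    (horth : ∀ j j', (∑ i, φ j i * φ j' i) = if j = j' then 1 else 0) :
    ∑ σ, gfun φ σ ^ 2 = 2 ^ n * D := by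
  have hg2 : ∀ σ, gfun φ σ ^ 2 = ∑ j, (∑ i, sg (σ i) * φ j i) ^ 2 := by
    intro σ; exact Real.sq_sqrt (by positivity)
  rw [Finset.sum_congr rfl fun σ _ => hg2 σ, Finset.sum_comm]
  have hj : ∀ j : Fin D, ∑ σ : Fin n → Bool, (∑ i, sg (σ i) * φ j i) ^ 2 = 2 ^ n := by
    intro j
    have e1 : ∀ σ : Fin n → Bool, (∑ i, sg (σ i) * φ j i) ^ 2
        = ∑ i, ∑ i', (φ j i * φ j i') * (sg (σ i) * sg (σ i')) := by
      intro σ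
      rw [pow_two, Finset.sum_mul_sum]
      exact Finset.sum_congr rfl fun i _ => Finset.sum_congr rfl fun i' _ => by ring
    rw [Finset.sum_congr rfl fun σ _ => e1 σ, Finset.sum_comm]
    have e2 : ∀ i : Fin n, ∑ σ : Fin n → Bool, ∑ i', (φ j i * φ j i') * (sg (σ i) * sg (σ i'))
        = φ j i ^ 2 * 2 ^ n := by
      intro i
      rw [Finset.sum_comm]
      have e3 : ∀ i', ∑ σ : Fin n → Bool, (φ j i * φ j i') * (sg (σ i) * sg (σ i'))
          = (φ j i * φ j i') * (if i = i' then (2:ℝ) ^ n else 0) := by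
        intro i'
        rw [← Finset.mul_sum, sg_orth i i']
      rw [Finset.sum_congr rfl fun i' _ => e3 i']
      simp [pow_two]
    rw [Finset.sum_congr rfl fun i _ => e2 i, ← Finset.sum_mul]
    have := horth j j
    rw [if_pos rfl] at this
    have e4 : ∑ i, φ j i ^ 2 = (1:ℝ) := by
      rw [← this]
      exact Finset.sum_congr rfl fun i _ => by ring
    rw [e4, one_mul]
  rw [Finset.sum_congr rfl fun j _ => hj j, Finset.sum_const, nsmul_eq_mul]
  simp [mul_comm]

lemma mean_sq_ge (φ : Fin D → Fin n → ℝ)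
    (horth : ∀ j j', (∑ i, φ j i * φ j' i) = if j = j' then 1 else 0) :
    (D:ℝ) - 2 ≤ ((∑ σ, gfun φ σ) / 2 ^ n) ^ 2 := by
  have hes := efron_stein (gfun φ)
  have hgrad : ∑ σ : Fin n → Bool, ∑ i, (gfun φ σ - gfun φ (cflip i σ)) ^ 2
      ≤ 8 * 2 ^ n := by
    rw [Finset.sum_comm]
    have h1 : ∀ i : Fin n, ∑ σ, (gfun φ σ - gfun φ (cflip i σ)) ^ 2
        = 2 * ∑ σ, max (gfun φ σ - gfun φ (cflip i σ)) 0 ^ 2 := fun i => edge_sym (gfun φ) i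
    rw [Finset.sum_congr rfl fun i _ => h1 i, ← Finset.mul_sum, Finset.sum_comm]
    have h2 : ∑ σ : Fin n → Bool, ∑ i, max (gfun φ σ - gfun φ (cflip i σ)) 0 ^ 2
        ≤ ∑ _σ : Fin n → Bool, (4:ℝ) :=
      Finset.sum_le_sum fun σ _ => grad_bound φ horth σ
    rw [Finset.sum_const, nsmul_eq_mul, Finset.card_univ, card_cube n] at h2
    push_cast at h2
    nlinarith [h2]
  rw [sum_sq_g φ horth] at hes
  have h2n : (0:ℝ) < 2 ^ n := by positivity
  rw [div_pow, le_div_iff₀ (by positivity : (0:ℝ) < ((2:ℝ)^n)^2)]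
  have hfinal : 2 ^ n * (2 ^ n * D) - (∑ σ, gfun φ σ) ^ 2
      ≤ (1/4) * 2 ^ n * (8 * 2 ^ n) := by
    refine hes.trans ?_
    have := mul_le_mul_of_nonneg_left hgrad (by positivity : (0:ℝ) ≤ (1/4) * 2 ^ n)
    linarith
  nlinarith [hfinal, h2n, sq_nonneg ((2:ℝ)^n)]

lemma mean_nonneg (φ : Fin D → Fin n → ℝ) : 0 ≤ (∑ σ, gfun φ σ) / 2 ^ n := by
  apply div_nonneg _ (by positivity)
  exact Finset.sum_nonneg fun σ _ => gfun_nonneg φ σ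

lemma mean_le_sqrtD (φ : Fin D → Fin n → ℝ)
    (horth : ∀ j j', (∑ i, φ j i * φ j' i) = if j = j' then 1 else 0) :
    (∑ σ, gfun φ σ) / 2 ^ n ≤ Real.sqrt D := by
  have hcs := Finset.sum_mul_sq_le_sq_mul_sq univ (gfun φ) (fun _ : Fin n → Bool => (1:ℝ))
  simp only [mul_one, one_pow] at hcs
  have hcard : ∑ _σ : Fin n → Bool, (1:ℝ) = 2 ^ n := by
    rw [Finset.sum_const, nsmul_eq_mul]
    simp [card_cube n]
  rw [hcard, sum_sq_g φ horth] at hcs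
  have h2n : (0:ℝ) < 2 ^ n := by positivity
  rw [show Real.sqrt (D:ℝ) = Real.sqrt D from rfl]
  rw [div_le_iff₀ h2n]
  have hsq : ((∑ σ, gfun φ σ)) ^ 2 ≤ (Real.sqrt D * 2 ^ n) ^ 2 := by
    have : (Real.sqrt D * 2 ^ n) ^ 2 = D * (2 ^ n * 2 ^ n) := by
      rw [mul_pow, Real.sq_sqrt (by positivity : (0:ℝ) ≤ (D:ℝ))]
      ring
    rw [this]
    nlinarith [hcs]
  have h1 : 0 ≤ Real.sqrt (D:ℝ) * 2 ^ n := by positivity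
  nlinarith [Finset.sum_nonneg fun σ (_ : σ ∈ univ) => gfun_nonneg φ σ, hsq]

lemma sqrt_max_le_mean (φ : Fin D → Fin n → ℝ)
    (horth : ∀ j j', (∑ i, φ j i * φ j' i) = if j = j' then 1 else 0) :
    Real.sqrt (max ((D:ℝ) - 2) 0) ≤ (∑ σ, gfun φ σ) / 2 ^ n := by
  set m := (∑ σ, gfun φ σ) / 2 ^ n with hm
  have h1 : max ((D:ℝ) - 2) 0 ≤ m ^ 2 :=
    max_le (mean_sq_ge φ horth) (sq_nonneg m)
  calc Real.sqrt (max ((D:ℝ) - 2) 0) ≤ Real.sqrt (m ^ 2) := Real.sqrt_le_sqrt h1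
    _ = m := Real.sqrt_sq (mean_nonneg φ)

end VarBound

section Tails

variable {n D : ℕ}

lemma markov_upper (φ : Fin D → Fin n → ℝ) (c lam : ℝ) (hlam : 0 ≤ lam)
    [DecidablePred fun σ : Fin n → Bool => c < gfun φ σ] :
    ((univ.filter fun σ : Fin n → Bool => c < gfun φ σ).card : ℝ) * Real.exp (lam * c)
      ≤ ∑ σ, Real.exp (lam * gfun φ σ) := by
  calc ((univ.filter fun σ : Fin n → Bool => c < gfun φ σ).card : ℝ) * Real.exp (lam * c)
      = ∑ _σ ∈ univ.filter (fun σ : Fin n → Bool => c < gfun φ σ), Real.exp (lam * c) := by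
        rw [Finset.sum_const, nsmul_eq_mul]
    _ ≤ ∑ σ ∈ univ.filter (fun σ : Fin n → Bool => c < gfun φ σ),
          Real.exp (lam * gfun φ σ) := by
        refine Finset.sum_le_sum fun σ hσ => Real.exp_le_exp.2 ?_
        have := (Finset.mem_filter.1 hσ).2
        exact mul_le_mul_of_nonneg_left this.le hlam
    _ ≤ ∑ σ, Real.exp (lam * gfun φ σ) :=
        Finset.sum_le_sum_of_subset_of_nonneg (Finset.filter_subset _ _)
          (fun σ _ _ => (Real.exp_pos _).le)

lemma markov_lower (φ : Fin D → Fin n → ℝ) (c lam : ℝ) (hlam : 0 ≤ lam)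
    [DecidablePred fun σ : Fin n → Bool => gfun φ σ < c] :
    ((univ.filter fun σ : Fin n → Bool => gfun φ σ < c).card : ℝ) * Real.exp (-(lam * c))
      ≤ ∑ σ, Real.exp (-(lam * gfun φ σ)) := by
  calc ((univ.filter fun σ : Fin n → Bool => gfun φ σ < c).card : ℝ) * Real.exp (-(lam * c))
      = ∑ _σ ∈ univ.filter (fun σ : Fin n → Bool => gfun φ σ < c), Real.exp (-(lam * c)) := by
        rw [Finset.sum_const, nsmul_eq_mul]
    _ ≤ ∑ σ ∈ univ.filter (fun σ : Fin n → Bool => gfun φ σ < c),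
          Real.exp (-(lam * gfun φ σ)) := by
        refine Finset.sum_le_sum fun σ hσ => Real.exp_le_exp.2 ?_
        have := (Finset.mem_filter.1 hσ).2
        have := mul_le_mul_of_nonneg_left this.le hlam
        linarith
    _ ≤ ∑ σ, Real.exp (-(lam * gfun φ σ)) :=
        Finset.sum_le_sum_of_subset_of_nonneg (Finset.filter_subset _ _)
          (fun σ _ _ => (Real.exp_pos _).le)

lemma finite_upper (φ : Fin D → Fin n → ℝ)
    (horth : ∀ j j', (∑ i, φ j i * φ j' i) = if j = j' then 1 else 0)
    {x : ℝ} (hx : 0 < x)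
    [DecidablePred fun σ : Fin n → Bool =>
      Real.sqrt D + 2 * Real.sqrt (2*x) < gfun φ σ] :
    ((univ.filter fun σ : Fin n → Bool =>
      Real.sqrt D + 2 * Real.sqrt (2*x) < gfun φ σ).card : ℝ)
      ≤ 2 ^ n * Real.exp (-x) := by
  set s := Real.sqrt (2*x) with hs
  have hs0 : 0 ≤ s := Real.sqrt_nonneg _
  have hs2 : s ^ 2 = 2 * x := Real.sq_sqrt (by linarith)
  set lam := s / 2 with hlam_def
  have hlam : 0 ≤ lam := by positivity
  set c := Real.sqrt D + 2 * s with hc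
  set m := (∑ σ, gfun φ σ) / 2 ^ n with hm
  have hmk := markov_upper φ c lam hlam
  have hsum := sum_exp_pos_le φ horth hlam
  rw [← hm] at hsum
  have hmean := mean_le_sqrtD φ horth
  rw [← hm] at hmean
  have hexp : lam * m + 2 * lam ^ 2 - lam * c ≤ -x := by
    have h1 : lam * m ≤ lam * Real.sqrt D := mul_le_mul_of_nonneg_left hmean hlam
    have h2 : lam * c = lam * Real.sqrt D + 2 * lam * s := by rw [hc]; ring
    nlinarith [h1, hs2]
  have hepos : 0 < Real.exp (lam * c) := Real.exp_pos _
  have key : ((univ.filter fun σ : Fin n → Bool => c < gfun φ σ).card : ℝ) * Real.exp (lam * c)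
      ≤ (2 ^ n * Real.exp (-x)) * Real.exp (lam * c) := by
    refine (hmk.trans hsum).trans ?_
    have e1 : Real.exp (lam * m + 2 * lam ^ 2) ≤ Real.exp (-x) * Real.exp (lam * c) := by
      rw [← Real.exp_add]
      exact Real.exp_le_exp.2 (by linarith [hexp])
    calc (2:ℝ) ^ n * Real.exp (lam * m + 2 * lam ^ 2)
        ≤ 2 ^ n * (Real.exp (-x) * Real.exp (lam * c)) := by
          exact mul_le_mul_of_nonneg_left e1 (by positivity)
      _ = (2 ^ n * Real.exp (-x)) * Real.exp (lam * c) := by ring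
  have hfin := le_of_mul_le_mul_right key hepos
  convert hfin using 3
  · rfl
  refine Finset.ext fun σ => ?_
  simp only [Finset.mem_filter, Finset.mem_univ, true_and]
  exact Iff.rfl

lemma finite_lower (φ : Fin D → Fin n → ℝ)
    (horth : ∀ j j', (∑ i, φ j i * φ j' i) = if j = j' then 1 else 0)
    {x : ℝ} (hx : 0 < x)
    [DecidablePred fun σ : Fin n → Bool =>
      gfun φ σ < Real.sqrt (max ((D:ℝ) - 2) 0) - 2 * Real.sqrt (2*x)] :
    ((univ.filter fun σ : Fin n → Bool =>
      gfun φ σ < Real.sqrt (max ((D:ℝ) - 2) 0) - 2 * Real.sqrt (2*x)).card : ℝ)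
      ≤ 2 ^ n * Real.exp (-x) := by
  set s := Real.sqrt (2*x) with hs
  have hs0 : 0 ≤ s := Real.sqrt_nonneg _
  have hs2 : s ^ 2 = 2 * x := Real.sq_sqrt (by linarith)
  set lam := s / 2 with hlam_def
  have hlam : 0 ≤ lam := by positivity
  set c := Real.sqrt (max ((D:ℝ) - 2) 0) - 2 * s with hc
  set m := (∑ σ, gfun φ σ) / 2 ^ n with hm
  have hmk := markov_lower φ c lam hlam
  have hsum := sum_exp_neg_le φ horth hlam
  rw [← hm] at hsum
  have hmean := sqrt_max_le_mean φ horth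
  rw [← hm] at hmean
  have hexp : -(lam * m) + 2 * lam ^ 2 + lam * c ≤ -x := by
    have h1 : lam * Real.sqrt (max ((D:ℝ) - 2) 0) ≤ lam * m :=
      mul_le_mul_of_nonneg_left hmean hlam
    have h2 : lam * c = lam * Real.sqrt (max ((D:ℝ) - 2) 0) - 2 * lam * s := by rw [hc]; ring
    nlinarith [h1, hs2]
  have hepos : 0 < Real.exp (-(lam * c)) := Real.exp_pos _
  have key : ((univ.filter fun σ : Fin n → Bool => gfun φ σ < c).card : ℝ)
        * Real.exp (-(lam * c))
      ≤ (2 ^ n * Real.exp (-x)) * Real.exp (-(lam * c)) := by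
    refine (hmk.trans hsum).trans ?_
    have e1 : Real.exp (-(lam * m) + 2 * lam ^ 2)
        ≤ Real.exp (-x) * Real.exp (-(lam * c)) := by
      rw [← Real.exp_add]
      exact Real.exp_le_exp.2 (by linarith [hexp])
    calc (2:ℝ) ^ n * Real.exp (-(lam * m) + 2 * lam ^ 2)
        ≤ 2 ^ n * (Real.exp (-x) * Real.exp (-(lam * c))) := by
          exact mul_le_mul_of_nonneg_left e1 (by positivity)
      _ = (2 ^ n * Real.exp (-x)) * Real.exp (-(lam * c)) := by ring
  have hfin := le_of_mul_le_mul_right key hepos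
  convert hfin using 3
  · rfl
  refine Finset.ext fun σ => ?_
  simp only [Finset.mem_filter, Finset.mem_univ, true_and]
  exact Iff.rfl

end Tails

section Reduction

lemma sg_inj : Function.Injective sg := by
  intro a b hab
  cases a <;> cases b <;> simp [sg] at hab ⊢ <;> norm_num at hab

lemma measure_eq_count {n : ℕ} {Ω : Type*} [MeasurableSpace Ω] (P : Measure Ω)
    [IsProbabilityMeasure P]
    (ε : Fin n → Ω → ℝ) (hmeas : ∀ i, Measurable (ε i))
    (hind : iIndepFun ε P)
    (hrad : ∀ i, P {ω | ε i ω = 1} = 1/2 ∧ P {ω | ε i ω = -1} = 1/2)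
    (S : Set (Fin n → ℝ)) (hS : MeasurableSet S)
    [DecidablePred fun σ : Fin n → Bool => (fun i => sg (σ i)) ∈ S] :
    P {ω | (fun i => ε i ω) ∈ S} =
      ((univ.filter fun σ : Fin n → Bool => (fun i => sg (σ i)) ∈ S).card : ℝ≥0∞)
        * (2:ℝ≥0∞)⁻¹ ^ n := by
  set E : (Fin n → Bool) → Set Ω := fun σ => ⋂ i, (ε i) ⁻¹' {sg (σ i)} with hE
  have hEmeas : ∀ σ, MeasurableSet (E σ) :=
    fun σ => MeasurableSet.iInter fun i => (hmeas i) (measurableSet_singleton _)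
  have hhalf : ∀ (i : Fin n) (b : Bool), P ((ε i) ⁻¹' {sg b}) = (2:ℝ≥0∞)⁻¹ := by
    intro i b
    cases b
    · have h := (hrad i).2
      have e : (ε i) ⁻¹' {sg false} = {ω | ε i ω = -1} := by
        ext ω; simp [sg]
      rw [e, h]
      rw [one_div]
    · have h := (hrad i).1
      have e : (ε i) ⁻¹' {sg true} = {ω | ε i ω = 1} := by
        ext ω; simp [sg]
      rw [e, h, one_div]
  have hEP : ∀ σ, P (E σ) = (2:ℝ≥0∞)⁻¹ ^ n := by
    intro σ
    rw [hE]
    have := hind.meas_iInter (s := fun i => (ε i) ⁻¹' {sg (σ i)})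
      (fun i => ⟨{sg (σ i)}, measurableSet_singleton _, rfl⟩)
    rw [this, Finset.prod_congr rfl fun i _ => hhalf i (σ i), Finset.prod_const]
    simp
  have hdisj : Pairwise (Function.onFun Disjoint E) := by
    intro σ σ' hne
    obtain ⟨i, hi⟩ := Function.ne_iff.1 hne
    refine Set.disjoint_left.2 fun ω hω hω' => ?_
    have h1 : ε i ω = sg (σ i) := by
      have := Set.mem_iInter.1 hω i; simpa using this
    have h2 : ε i ω = sg (σ' i) := by
      have := Set.mem_iInter.1 hω' i; simpa using this
    exact hi (sg_inj (h1 ▸ h2 ▸ rfl))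
  have hUP : P (⋃ σ, E σ) = 1 := by
    rw [measure_iUnion hdisj hEmeas, tsum_fintype]
    rw [Finset.sum_congr rfl fun σ _ => hEP σ, Finset.sum_const, Finset.card_univ, card_cube n]
    rw [nsmul_eq_mul]
    rw [show ((2 ^ n : ℕ) : ℝ≥0∞) = (2:ℝ≥0∞) ^ n by push_cast; ring]
    rw [← mul_pow, ENNReal.mul_inv_cancel (by norm_num) (by norm_num), one_pow]
  have hcompl : P ((⋃ σ, E σ)ᶜ) = 0 := by
    rw [measure_compl (MeasurableSet.iUnion hEmeas) (measure_ne_top P _), hUP]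
    simp
  set A := {ω | (fun i => ε i ω) ∈ S} with hA
  have hAmeas : MeasurableSet A := by
    have hvec : Measurable (fun ω (i : Fin n) => ε i ω) :=
      measurable_pi_lambda _ (fun i => hmeas i)
    exact hvec hS
  have hsplit : P A = ∑ σ : Fin n → Bool, P (A ∩ E σ) := by
    have h1 : P A = P (A ∩ ⋃ σ, E σ) := by
      refine le_antisymm ?_ (measure_mono Set.inter_subset_left)
      calc P A = P ((A ∩ ⋃ σ, E σ) ∪ (A \ ⋃ σ, E σ)) := by
            rw [Set.inter_union_diff]
        _ ≤ P (A ∩ ⋃ σ, E σ) + P (A \ ⋃ σ, E σ) := measure_union_le _ _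
        _ ≤ P (A ∩ ⋃ σ, E σ) + 0 := by
            refine add_le_add (le_refl _) ?_
            refine le_trans (measure_mono ?_) hcompl.le
            exact Set.diff_subset_compl A _ |>.trans (le_refl _)
        _ = P (A ∩ ⋃ σ, E σ) := by rw [add_zero]
    rw [h1, Set.inter_iUnion, measure_iUnion ?_ (fun σ => hAmeas.inter (hEmeas σ)),
      tsum_fintype]
    exact fun σ σ' hne => (hdisj hne).mono Set.inter_subset_right Set.inter_subset_right
  have hterm : ∀ σ : Fin n → Bool, P (A ∩ E σ)
      = if (fun i => sg (σ i)) ∈ S then (2:ℝ≥0∞)⁻¹ ^ n else 0 := by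
    intro σ
    by_cases hmem : (fun i => sg (σ i)) ∈ S
    · rw [if_pos hmem]
      have hsub : E σ ⊆ A := by
        intro ω hω
        have hvec : (fun i => ε i ω) = fun i => sg (σ i) := by
          funext i
          have := Set.mem_iInter.1 hω i
          simpa using this
        rw [hA]
        simp only [Set.mem_setOf_eq, hvec]
        exact hmem
      rw [Set.inter_eq_right.2 hsub, hEP σ]
    · rw [if_neg hmem]
      have hempty : A ∩ E σ = ∅ := by
        refine Set.eq_empty_of_forall_notMem fun ω hω => ?_
        have hωA := hω.1
        have hωE := hω.2
        have hvec : (fun i => ε i ω) = fun i => sg (σ i) := by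
          funext i
          have := Set.mem_iInter.1 hωE i
          simpa using this
        rw [hA] at hωA
        simp only [Set.mem_setOf_eq, hvec] at hωA
        exact hmem hωA
      rw [hempty, measure_empty]
  rw [hsplit, Finset.sum_congr rfl fun σ _ => hterm σ]
  rw [Finset.sum_ite, Finset.sum_const, Finset.sum_const_zero, add_zero, nsmul_eq_mul]

end Reduction

end ChiTail

/-- Upper and lower tail bounds for the chi-square type statistic
`χ = (∑_j ⟨ε, φ_j⟩²)^{1/2}`: for every `x > 0`,
`P(χ > √D + 2√(2x)) ≤ e^{−x}` and `P(χ < √((D−2)₊) − 2√(2x)) ≤ e^{−x}`. -/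
theorem chi_tail_bounds {n D : ℕ}
    {Ω : Type*} [MeasurableSpace Ω] (P : Measure Ω) [IsProbabilityMeasure P]
    (ε : Fin n → Ω → ℝ) (hmeas : ∀ i, Measurable (ε i))
    (hind : iIndepFun ε P)
    (hrad : ∀ i, P {ω | ε i ω = 1} = 1/2 ∧ P {ω | ε i ω = -1} = 1/2)
    (φ : Fin D → Fin n → ℝ)
    (horth : ∀ j j', ∑ i, φ j i * φ j' i = if j = j' then 1 else 0)
    (χ : Ω → ℝ)
    (hχ : ∀ ω, χ ω = Real.sqrt (∑ j, (∑ i, ε i ω * φ j i) ^ 2)) :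
    ∀ x : ℝ, 0 < x →
      (P {ω | Real.sqrt D + 2 * Real.sqrt (2 * x) < χ ω}).toReal ≤ Real.exp (-x) ∧
      (P {ω | χ ω < Real.sqrt (max ((D : ℝ) - 2) 0) - 2 * Real.sqrt (2 * x)}).toReal ≤
        Real.exp (-x) := by
  intro x hx
  classical
  have hFmeas : Measurable (fun y : Fin n → ℝ =>
      Real.sqrt (∑ j, (∑ i, y i * φ j i) ^ 2)) := by
    have hsum : Measurable (fun y : Fin n → ℝ => ∑ j, (∑ i, y i * φ j i) ^ 2) := by
      refine Finset.measurable_sum _ fun j _ => ?_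
      have : Measurable (fun y : Fin n → ℝ => ∑ i, y i * φ j i) :=
        Finset.measurable_sum _ fun i _ => (measurable_pi_apply i).mul_const _
      exact this.pow_const 2
    exact Real.continuous_sqrt.measurable.comp hsum
  have hhalfpow : ((2:ℝ≥0∞)⁻¹ ^ n).toReal = ((2:ℝ)⁻¹) ^ n := by
    rw [ENNReal.toReal_pow, ENNReal.toReal_inv]
    norm_num
  have hpowmul : ((2:ℝ) ^ n) * ((2:ℝ)⁻¹) ^ n = 1 := by
    rw [← mul_pow]
    norm_num
  constructor
  · -- upper tail
    set c := Real.sqrt (D:ℝ) + 2 * Real.sqrt (2 * x) with hc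
    set S : Set (Fin n → ℝ) :=
      {y | c < Real.sqrt (∑ j, (∑ i, y i * φ j i) ^ 2)} with hSdef
    have hS : MeasurableSet S := hFmeas measurableSet_Ioi
    have hset : {ω | c < χ ω} = {ω | (fun i => ε i ω) ∈ S} := by
      ext ω
      simp only [Set.mem_setOf_eq, hχ ω, hSdef]
    rw [show {ω | Real.sqrt (D:ℝ) + 2 * Real.sqrt (2 * x) < χ ω} = {ω | c < χ ω} from rfl,
      hset, ChiTail.measure_eq_count P ε hmeas hind hrad S hS]
    have hcards : (univ.filter fun σ : Fin n → Bool => (fun i => ChiTail.sg (σ i)) ∈ S)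
        = (univ.filter fun σ : Fin n → Bool => c < ChiTail.gfun φ σ) := by
      refine Finset.ext fun σ => ?_
      simp only [Finset.mem_filter, Finset.mem_univ, true_and, hSdef, Set.mem_setOf_eq]
      rfl
    have hcard : ((univ.filter fun σ : Fin n → Bool => c < ChiTail.gfun φ σ).card : ℝ)
        ≤ 2 ^ n * Real.exp (-x) := by
      have := ChiTail.finite_upper φ horth hx
        (n := n) (D := D)
      convert this using 3
    rw [hcards, ENNReal.toReal_mul, hhalfpow, ENNReal.toReal_natCast]
    calc ((univ.filter fun σ : Fin n → Bool => c < ChiTail.gfun φ σ).card : ℝ) * (2:ℝ)⁻¹ ^ n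
        ≤ (2 ^ n * Real.exp (-x)) * (2:ℝ)⁻¹ ^ n := by
          refine mul_le_mul_of_nonneg_right hcard (by positivity)
      _ = Real.exp (-x) := by
          rw [mul_comm ((2:ℝ)^n) (Real.exp (-x)), mul_assoc, hpowmul, mul_one]
  · -- lower tail
    set c := Real.sqrt (max ((D:ℝ) - 2) 0) - 2 * Real.sqrt (2 * x) with hc
    set S : Set (Fin n → ℝ) :=
      {y | Real.sqrt (∑ j, (∑ i, y i * φ j i) ^ 2) < c} with hSdef
    have hS : MeasurableSet S := hFmeas measurableSet_Iio
    have hset : {ω | χ ω < c} = {ω | (fun i => ε i ω) ∈ S} := by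
      ext ω
      simp only [Set.mem_setOf_eq, hχ ω, hSdef]
    rw [show {ω | χ ω < Real.sqrt (max ((D:ℝ) - 2) 0) - 2 * Real.sqrt (2 * x)}
        = {ω | χ ω < c} from rfl,
      hset, ChiTail.measure_eq_count P ε hmeas hind hrad S hS]
    have hcards : (univ.filter fun σ : Fin n → Bool => (fun i => ChiTail.sg (σ i)) ∈ S)
        = (univ.filter fun σ : Fin n → Bool => ChiTail.gfun φ σ < c) := by
      refine Finset.ext fun σ => ?_
      simp only [Finset.mem_filter, Finset.mem_univ, true_and, hSdef, Set.mem_setOf_eq]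
      rfl
    have hcard : ((univ.filter fun σ : Fin n → Bool => ChiTail.gfun φ σ < c).card : ℝ)
        ≤ 2 ^ n * Real.exp (-x) := by
      have := ChiTail.finite_lower φ horth hx
        (n := n) (D := D)
      convert this using 3
    rw [hcards, ENNReal.toReal_mul, hhalfpow, ENNReal.toReal_natCast]
    calc ((univ.filter fun σ : Fin n → Bool => ChiTail.gfun φ σ < c).card : ℝ) * (2:ℝ)⁻¹ ^ n
        ≤ (2 ^ n * Real.exp (-x)) * (2:ℝ)⁻¹ ^ n := by
          refine mul_le_mul_of_nonneg_right hcard (by positivity)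
      _ = Real.exp (-x) := by
          rw [mul_comm ((2:ℝ)^n) (Real.exp (-x)), mul_assoc, hpowmul, mul_one]
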